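/- arXiv:1601.07417 — 4 statements merged into one kernel-verified Lean document; each statement's English description precedes it below -/
import Mathlib

section
/- The correlation ratio satisfies η_Z(Y)^2 = sup over Borel measurable g with 0 < var(g(Z)) < ∞ of ρ^2(Y, g(Z)), where ρ is the Pearson correlation coefficient. -/
open MeasureTheory ProbabilityTheory

noncomputable section

variable {Ω : Type*} [MeasurableSpace Ω]

/-- Minimum mean-squared error of estimating `U` from `V`: `E[(U - E[U|σ(V)])²]`. -/
def mmse (μ : Measure Ω) {β : Type*} [MeasurableSpace β] (U : Ω → ℝ) (V : Ω → β) : ℝ :=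
  ∫ ω, (U ω - (μ[U | MeasurableSpace.comap V inferInstance]) ω) ^ 2 ∂μ

/-- The squared Hirschfeld–Gebelein–Rényi maximal correlation of `A` and `B`:
the supremum of squared Pearson correlations `ρ²(f(A), g(B))` over all measurable `f, g`
with zero mean and finite nonzero variance. -/
def rho2max (μ : Measure Ω) {α β : Type*} [MeasurableSpace α] [MeasurableSpace β]
    (A : Ω → α) (B : Ω → β) : ℝ :=
  sSup {r : ℝ | ∃ f : α → ℝ, ∃ g : β → ℝ, Measurable f ∧ Measurable g ∧
    (∫ ω, f (A ω) ∂μ) = 0 ∧ (∫ ω, g (B ω) ∂μ) = 0 ∧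
    0 < variance (fun ω => f (A ω)) μ ∧ MemLp (fun ω => f (A ω)) 2 μ ∧
    0 < variance (fun ω => g (B ω)) μ ∧ MemLp (fun ω => g (B ω)) 2 μ ∧
    r = (∫ ω, f (A ω) * g (B ω) ∂μ) ^ 2 /
        (variance (fun ω => f (A ω)) μ * variance (fun ω => g (B ω)) μ)}

end

section AuxLemmas

variable {Ω : Type*} [MeasurableSpace Ω] {μ : Measure Ω}

lemma aux_int_mul {f h : Ω → ℝ} (hf : MemLp f 2 μ) (hh : MemLp h 2 μ) :
    Integrable (fun ω => f ω * h ω) μ := by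
  have : (1 : ENNReal) / 1 = 1 / 2 + 1 / 2 := by
    rw [ENNReal.div_add_div_same, one_add_one_eq_two, div_one,
      ENNReal.div_self (by norm_num) ENNReal.ofNat_ne_top]
  have h2 := memLp_one_iff_integrable.mp (hh.smul (r := 1) hf)
  exact h2

lemma aux_variance_congr {f h : Ω → ℝ} (hfh : f =ᵐ[μ] h) : variance f μ = variance h μ := by
  have hi : μ[f] = μ[h] := integral_congr_ae hfh
  rw [variance, variance, evariance, evariance, hi]
  congr 1
  refine lintegral_congr_ae ?_
  filter_upwards [hfh] with ω hω
  rw [hω]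

lemma aux_var_eq [IsProbabilityMeasure μ] {f : Ω → ℝ} (hf : MemLp f 2 μ) :
    variance f μ = ∫ ω, (f ω - ∫ ω', f ω' ∂μ) ^ 2 ∂μ := by
  rw [variance_eq_integral hf.aestronglyMeasurable.aemeasurable]

lemma aux_sq_int_mul_le {f h : Ω → ℝ} (hf : MemLp f 2 μ) (hh : MemLp h 2 μ) :
    (∫ ω, f ω * h ω ∂μ) ^ 2 ≤ (∫ ω, f ω ^ 2 ∂μ) * (∫ ω, h ω ^ 2 ∂μ) := by
  set F := hf.toLp f with hF
  set H := hh.toLp h with hH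
  have hFH : (inner ℝ F H : ℝ) = ∫ ω, f ω * h ω ∂μ := by
    rw [L2.inner_def]
    refine integral_congr_ae ?_
    filter_upwards [hf.coeFn_toLp, hh.coeFn_toLp] with ω h1 h2
    simp [RCLike.inner_apply, starRingEnd_apply, hF, hH, h1, h2, mul_comm]
  have hFF : (inner ℝ F F : ℝ) = ∫ ω, f ω ^ 2 ∂μ := by
    rw [L2.inner_def]
    refine integral_congr_ae ?_
    filter_upwards [hf.coeFn_toLp] with ω h1
    simp [RCLike.inner_apply, starRingEnd_apply, hF, h1, sq]
  have hHH : (inner ℝ H H : ℝ) = ∫ ω, h ω ^ 2 ∂μ := by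
    rw [L2.inner_def]
    refine integral_congr_ae ?_
    filter_upwards [hh.coeFn_toLp] with ω h1
    simp [RCLike.inner_apply, starRingEnd_apply, hH, h1, sq]
  have := real_inner_mul_inner_self_le F H
  rw [hFH, hFF, hHH] at this
  nlinarith [this]

lemma aux_cov_expand [IsProbabilityMeasure μ] {f h : Ω → ℝ} (hf : MemLp f 2 μ)
    (hh : MemLp h 2 μ) :
    ∫ ω, (f ω - ∫ ω', f ω' ∂μ) * (h ω - ∫ ω', h ω' ∂μ) ∂μ
      = (∫ ω, f ω * h ω ∂μ) - (∫ ω', f ω' ∂μ) * (∫ ω', h ω' ∂μ) := by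
  set a := ∫ ω', f ω' ∂μ
  set b := ∫ ω', h ω' ∂μ
  have hfh := aux_int_mul hf hh
  have hfi := hf.integrable one_le_two
  have hhi := hh.integrable one_le_two
  have hrw : ∀ ω, (f ω - a) * (h ω - b) = f ω * h ω - a * h ω - b * f ω + a * b := by
    intro ω; ring
  have h1 : Integrable (fun ω => f ω * h ω - a * h ω) μ := hfh.sub (hhi.const_mul a)
  have h2 : Integrable (fun ω => f ω * h ω - a * h ω - b * f ω) μ := h1.sub (hfi.const_mul b)
  simp_rw [hrw]
  rw [integral_add h2 (integrable_const _), integral_sub h1 (hfi.const_mul b),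
    integral_sub hfh (hhi.const_mul a), integral_const_mul, integral_const_mul, integral_const]
  simp [measure_univ]
  ring

lemma aux_memℒp_condexp {Ω : Type*} {m m0 : MeasurableSpace Ω} {μ : Measure Ω}
    [IsProbabilityMeasure μ] (hm : m ≤ m0) {f : Ω → ℝ} (hf : MemLp f 2 μ) :
    MemLp (μ[f|m]) 2 μ := by
  set F := hf.toLp f with hFdef
  have heq : (condExpL2 ℝ ℝ hm F : Ω → ℝ) =ᵐ[μ] μ[f|m] := by
    refine ae_eq_condExp_of_forall_setIntegral_eq hm (hf.integrable one_le_two)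
      (fun s hs hμs => integrableOn_condExpL2_of_measure_ne_top hm hμs.ne F)
      (fun s hs hμs => ?_) (aestronglyMeasurable_condExpL2 hm F)
    rw [integral_condExpL2_eq hm F hs hμs.ne]
    exact setIntegral_congr_ae (hm s hs) (hf.coeFn_toLp.mono fun ω h _ => h)
  exact (Lp.memLp ((condExpL2 ℝ ℝ hm F : Lp ℝ 2 μ))).ae_eq heq

lemma aux_condexp_factor {Ω : Type*} [MeasurableSpace Ω] (μ : Measure Ω) [IsProbabilityMeasure μ]
    (Y Z : Ω → ℝ) (hZ : Measurable Z) (hYi : Integrable Y μ) :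
    ∃ g : ℝ → ℝ, Measurable g ∧
      (fun ω => g (Z ω)) =ᵐ[μ] μ[Y | MeasurableSpace.comap Z inferInstance] := by
  refine ⟨fun x => ∫ y, y ∂(condDistrib Y Z μ x), ?_, ?_⟩
  · exact (MeasureTheory.StronglyMeasurable.integral_kernel_prod_right
      (κ := condDistrib Y Z μ) (f := fun x (y : ℝ) => y)
      measurable_snd.stronglyMeasurable).measurable
  · exact (condExp_ae_eq_integral_condDistrib' hZ hYi).symm


lemma aux_main {Ω : Type*} {m mΩ : MeasurableSpace Ω} {μ : Measure Ω} [IsProbabilityMeasure μ]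
    (hm : m ≤ mΩ) (Y Z : Ω → ℝ) (hZm : Measurable[m] Z)
    (hY2 : MemLp Y 2 μ) (hv : 0 < variance Y μ)
    (hE2 : MemLp (μ[Y|m]) 2 μ)
    (hfac : ∃ g : ℝ → ℝ, Measurable g ∧ (fun ω => g (Z ω)) =ᵐ[μ] μ[Y|m]) :
    variance (μ[Y|m]) μ / variance Y μ
      = sSup {r : ℝ | ∃ g : ℝ → ℝ, Measurable g ∧
          0 < variance (fun ω => g (Z ω)) μ ∧ MemLp (fun ω => g (Z ω)) 2 μ ∧
          r = (∫ ω, (Y ω - ∫ ω', Y ω' ∂μ) * (g (Z ω) - ∫ ω', g (Z ω') ∂μ) ∂μ) ^ 2 /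
              (variance Y μ * variance (fun ω => g (Z ω)) μ)} := by
  haveI : SigmaFinite (μ.trim hm) := inferInstance
  set E := μ[Y|m] with hEdef
  have hYi : Integrable Y μ := hY2.integrable one_le_two
  have hintE : ∫ ω, E ω ∂μ = ∫ ω, Y ω ∂μ := integral_condExp hm
  -- orthogonality: E[Y W] = E[E W] for m-measurable L² W
  have horth : ∀ W : Ω → ℝ, StronglyMeasurable[m] W → MemLp W 2 μ →
      ∫ ω, Y ω * W ω ∂μ = ∫ ω, E ω * W ω ∂μ := by
    intro W hWm hW2
    have hWY : Integrable (W * Y) μ := aux_int_mul hW2 hY2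
    have hpull := condExp_mul_of_stronglyMeasurable_left hWm hWY hYi
    calc ∫ ω, Y ω * W ω ∂μ = ∫ ω, (W * Y) ω ∂μ := by
            simp_rw [Pi.mul_apply, mul_comm]
      _ = ∫ ω, (μ[W * Y|m]) ω ∂μ := (integral_condExp hm).symm
      _ = ∫ ω, (W * μ[Y|m]) ω ∂μ := integral_congr_ae hpull
      _ = ∫ ω, E ω * W ω ∂μ := by
            simp_rw [Pi.mul_apply, ← hEdef, mul_comm]
  have hcov : ∀ W : Ω → ℝ, StronglyMeasurable[m] W → MemLp W 2 μ →
      (∫ ω, (Y ω - ∫ ω', Y ω' ∂μ) * (W ω - ∫ ω', W ω' ∂μ) ∂μ)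
        = ∫ ω, (E ω - ∫ ω', E ω' ∂μ) * (W ω - ∫ ω', W ω' ∂μ) ∂μ := by
    intro W hWm hW2
    rw [aux_cov_expand hY2 hW2, aux_cov_expand hE2 hW2, horth W hWm hW2, hintE]
  have hCS : ∀ W : Ω → ℝ, MemLp W 2 μ →
      (∫ ω, (E ω - ∫ ω', E ω' ∂μ) * (W ω - ∫ ω', W ω' ∂μ) ∂μ) ^ 2
        ≤ variance E μ * variance W μ := by
    intro W hW2
    have hf : MemLp (fun ω => E ω - ∫ ω', E ω' ∂μ) 2 μ := hE2.sub (memLp_const _)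
    have hh : MemLp (fun ω => W ω - ∫ ω', W ω' ∂μ) 2 μ := hW2.sub (memLp_const _)
    have h1 := aux_sq_int_mul_le hf hh
    rw [aux_var_eq hE2, aux_var_eq hW2]
    exact h1
  -- upper bound
  have hub : ∀ r ∈ {r : ℝ | ∃ g : ℝ → ℝ, Measurable g ∧
          0 < variance (fun ω => g (Z ω)) μ ∧ MemLp (fun ω => g (Z ω)) 2 μ ∧
          r = (∫ ω, (Y ω - ∫ ω', Y ω' ∂μ) * (g (Z ω) - ∫ ω', g (Z ω') ∂μ) ∂μ) ^ 2 /
              (variance Y μ * variance (fun ω => g (Z ω)) μ)},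
      r ≤ variance E μ / variance Y μ := by
    rintro r ⟨g, hg, hvW, hW2, rfl⟩
    have hWm : StronglyMeasurable[m] fun ω => g (Z ω) :=
      (Measurable.stronglyMeasurable (hg.comp hZm) : _)
    have hle : (∫ ω, (Y ω - ∫ ω', Y ω' ∂μ) * (g (Z ω) - ∫ ω', g (Z ω') ∂μ) ∂μ) ^ 2
        ≤ variance E μ * variance (fun ω => g (Z ω)) μ := by
      rw [hcov _ hWm hW2]
      exact hCS _ hW2
    have hd : 0 < variance Y μ * variance (fun ω => g (Z ω)) μ := mul_pos hv hvW
    calc (∫ ω, (Y ω - ∫ ω', Y ω' ∂μ) * (g (Z ω) - ∫ ω', g (Z ω') ∂μ) ∂μ) ^ 2 /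
          (variance Y μ * variance (fun ω => g (Z ω)) μ)
        ≤ (variance E μ * variance (fun ω => g (Z ω)) μ) /
          (variance Y μ * variance (fun ω => g (Z ω)) μ) := (div_le_div_iff_of_pos_right hd).mpr hle
      _ = variance E μ / variance Y μ := by
          rw [mul_div_mul_right _ _ hvW.ne']
  rcases eq_or_lt_of_le (variance_nonneg E μ) with hE0 | hEpos
  · -- degenerate case : var E = 0, all correlations vanish
    have hall : ∀ r ∈ {r : ℝ | ∃ g : ℝ → ℝ, Measurable g ∧
          0 < variance (fun ω => g (Z ω)) μ ∧ MemLp (fun ω => g (Z ω)) 2 μ ∧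
          r = (∫ ω, (Y ω - ∫ ω', Y ω' ∂μ) * (g (Z ω) - ∫ ω', g (Z ω') ∂μ) ∂μ) ^ 2 /
              (variance Y μ * variance (fun ω => g (Z ω)) μ)}, r = 0 := by
      rintro r ⟨g, hg, hvW, hW2, rfl⟩
      have hWm : StronglyMeasurable[m] fun ω => g (Z ω) :=
        (Measurable.stronglyMeasurable (hg.comp hZm) : _)
      have hle : (∫ ω, (Y ω - ∫ ω', Y ω' ∂μ) * (g (Z ω) - ∫ ω', g (Z ω') ∂μ) ∂μ) ^ 2
          ≤ variance E μ * variance (fun ω => g (Z ω)) μ := by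
        rw [hcov _ hWm hW2]
        exact hCS _ hW2
      rw [← hE0, zero_mul] at hle
      have h0 : (∫ ω, (Y ω - ∫ ω', Y ω' ∂μ) * (g (Z ω) - ∫ ω', g (Z ω') ∂μ) ∂μ) ^ 2 = 0 :=
        le_antisymm hle (sq_nonneg _)
      rw [h0, zero_div]
    have hgoal : variance E μ / variance Y μ = 0 := by rw [← hE0, zero_div]
    rw [hgoal]
    rcases Set.eq_empty_or_nonempty {r : ℝ | ∃ g : ℝ → ℝ, Measurable g ∧
          0 < variance (fun ω => g (Z ω)) μ ∧ MemLp (fun ω => g (Z ω)) 2 μ ∧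
          r = (∫ ω, (Y ω - ∫ ω', Y ω' ∂μ) * (g (Z ω) - ∫ ω', g (Z ω') ∂μ) ∂μ) ^ 2 /
              (variance Y μ * variance (fun ω => g (Z ω)) μ)} with hS | hS
    · rw [hS, Real.sSup_empty]
    · obtain ⟨r0, hr0⟩ := hS
      refine le_antisymm ?_ (Real.sSup_le (fun r hr => (hall r hr).le) le_rfl)
      have h := le_csSup (⟨0, fun r hr => (hall r hr).le⟩ :
        BddAbove {r : ℝ | ∃ g : ℝ → ℝ, Measurable g ∧
          0 < variance (fun ω => g (Z ω)) μ ∧ MemLp (fun ω => g (Z ω)) 2 μ ∧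
          r = (∫ ω, (Y ω - ∫ ω', Y ω' ∂μ) * (g (Z ω) - ∫ ω', g (Z ω') ∂μ) ∂μ) ^ 2 /
              (variance Y μ * variance (fun ω => g (Z ω)) μ)}) hr0
      rwa [hall r0 hr0] at h
  · -- nondegenerate case: the sup is attained at g₀ with g₀ ∘ Z = E a.e.
    obtain ⟨g₀, hg₀, hae'⟩ := hfac
    have hW0 : MemLp (fun ω => g₀ (Z ω)) 2 μ := hE2.ae_eq hae'.symm
    have hW0m : StronglyMeasurable[m] fun ω => g₀ (Z ω) :=
      (Measurable.stronglyMeasurable (hg₀.comp hZm) : _)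
    have hvW0 : variance (fun ω => g₀ (Z ω)) μ = variance E μ := aux_variance_congr hae'
    have hintW0 : ∫ ω', g₀ (Z ω') ∂μ = ∫ ω', E ω' ∂μ := integral_congr_ae hae'
    have hnum : ∫ ω, (Y ω - ∫ ω', Y ω' ∂μ) * (g₀ (Z ω) - ∫ ω', g₀ (Z ω') ∂μ) ∂μ
        = variance E μ := by
      rw [hcov _ hW0m hW0, hintW0]
      have heq2 : ∫ ω, (E ω - ∫ ω', E ω' ∂μ) * (g₀ (Z ω) - ∫ ω', E ω' ∂μ) ∂μ
          = ∫ ω, (E ω - ∫ ω', E ω' ∂μ) ^ 2 ∂μ := by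
        refine integral_congr_ae ?_
        filter_upwards [hae'] with ω hω
        rw [hω, sq]
      rw [heq2, ← aux_var_eq hE2]
    have hmem : variance E μ / variance Y μ ∈ {r : ℝ | ∃ g : ℝ → ℝ, Measurable g ∧
          0 < variance (fun ω => g (Z ω)) μ ∧ MemLp (fun ω => g (Z ω)) 2 μ ∧
          r = (∫ ω, (Y ω - ∫ ω', Y ω' ∂μ) * (g (Z ω) - ∫ ω', g (Z ω') ∂μ) ∂μ) ^ 2 /
              (variance Y μ * variance (fun ω => g (Z ω)) μ)} := by
      refine ⟨g₀, hg₀, hvW0 ▸ hEpos, hW0, ?_⟩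
      rw [hnum, hvW0]
      field_simp
    exact le_antisymm (le_csSup ⟨_, hub⟩ hmem)
      (Real.sSup_le hub (div_nonneg (variance_nonneg _ _) (variance_nonneg _ _)))

end AuxLemmas

/-- The correlation ratio `η_Z(Y)² = var(E[Y|Z])/var(Y)` equals the supremum of squared
Pearson correlations `ρ²(Y, g(Z))` over measurable `g` with finite nonzero variance. -/
theorem stmt2 {Ω : Type*} [MeasurableSpace Ω] (μ : Measure Ω) [IsProbabilityMeasure μ]
    (Y Z : Ω → ℝ) (hY : Measurable Y) (hZ : Measurable Z)
    (hY2 : MemLp Y 2 μ) (hv : 0 < variance Y μ) :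
    variance (μ[Y | MeasurableSpace.comap Z inferInstance]) μ / variance Y μ
      = sSup {r : ℝ | ∃ g : ℝ → ℝ, Measurable g ∧
          0 < variance (fun ω => g (Z ω)) μ ∧ MemLp (fun ω => g (Z ω)) 2 μ ∧
          r = (∫ ω, (Y ω - ∫ ω', Y ω' ∂μ) * (g (Z ω) - ∫ ω', g (Z ω') ∂μ) ∂μ) ^ 2 /
              (variance Y μ * variance (fun ω => g (Z ω)) μ)} :=
  aux_main hZ.comap_le Y Z (Measurable.of_comap_le le_rfl) hY2 hv
    (aux_memℒp_condexp hZ.comap_le hY2)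
    (aux_condexp_factor μ Y Z hZ (hY2.integrable one_le_two))
end

section
/- For the erasure channel Z_δ of a random variable Y with erasure probability δ, the squared maximal correlation satisfies ρ_m^2(Y; Z_δ) = 1 - δ, and for any X with X–Y–Z_δ a Markov chain, ρ_m^2(X; Z_δ) = (1-δ) ρ_m^2(X;Y). -/
open MeasureTheory ProbabilityTheory

noncomputable section Aux

set_option linter.unusedSectionVars false

variable {Ω : Type*} [MeasurableSpace Ω] {μ : Measure Ω} [IsProbabilityMeasure μ]

/-- The set whose supremum defines `rho2max`. -/
def rset (μ : Measure Ω) {α β : Type*} [MeasurableSpace α] [MeasurableSpace β]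
    (A : Ω → α) (B : Ω → β) : Set ℝ :=
  {r : ℝ | ∃ f : α → ℝ, ∃ g : β → ℝ, Measurable f ∧ Measurable g ∧
    (∫ ω, f (A ω) ∂μ) = 0 ∧ (∫ ω, g (B ω) ∂μ) = 0 ∧
    0 < variance (fun ω => f (A ω)) μ ∧ MemLp (fun ω => f (A ω)) 2 μ ∧
    0 < variance (fun ω => g (B ω)) μ ∧ MemLp (fun ω => g (B ω)) 2 μ ∧
    r = (∫ ω, f (A ω) * g (B ω) ∂μ) ^ 2 /
        (variance (fun ω => f (A ω)) μ * variance (fun ω => g (B ω)) μ)}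

lemma rho2max_eq_sSup {α β : Type*} [MeasurableSpace α] [MeasurableSpace β]
    (A : Ω → α) (B : Ω → β) : rho2max μ A B = sSup (rset μ A B) := rfl

lemma fin_comp {γ δ' : Type*} {V : Ω → γ} (h : (Set.range V).Finite) (f : γ → δ') :
    (Set.range fun ω => f (V ω)).Finite :=
  (h.image f).subset (by rintro x ⟨ω, rfl⟩; exact ⟨V ω, ⟨ω, rfl⟩, rfl⟩)

lemma fin_mul {F G : Ω → ℝ} (hF : (Set.range F).Finite) (hG : (Set.range G).Finite) :
    (Set.range fun ω => F ω * G ω).Finite :=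
  (Set.Finite.image2 (· * ·) hF hG).subset
    (by rintro x ⟨ω, rfl⟩; exact Set.mem_image2_of_mem ⟨ω, rfl⟩ ⟨ω, rfl⟩)

lemma fin_memLp {F : Ω → ℝ} (hF : Measurable F) (hr : (Set.range F).Finite) (p : ENNReal) :
    MemLp F p μ := by
  obtain ⟨C, hC⟩ := (hr.image norm).bddAbove
  exact MemLp.of_bound hF.aestronglyMeasurable C
    (Filter.Eventually.of_forall fun ω => hC ⟨F ω, Set.mem_range_self ω, rfl⟩)

lemma fin_int {F : Ω → ℝ} (hF : Measurable F) (hr : (Set.range F).Finite) :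
    Integrable F μ :=
  memLp_one_iff_integrable.mp (fin_memLp hF hr 1)

lemma cauchy {F G : Ω → ℝ} (hF2 : Integrable (fun ω => F ω ^ 2) μ)
    (hG2 : Integrable (fun ω => G ω ^ 2) μ) (hFG : Integrable (fun ω => F ω * G ω) μ) :
    (∫ ω, F ω * G ω ∂μ) ^ 2 ≤ (∫ ω, F ω ^ 2 ∂μ) * (∫ ω, G ω ^ 2 ∂μ) := by
  set P := ∫ ω, F ω ^ 2 ∂μ
  set S := ∫ ω, G ω ^ 2 ∂μ
  set J := ∫ ω, F ω * G ω ∂μ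
  have hP : 0 ≤ P := integral_nonneg fun ω => sq_nonneg _
  have hS : 0 ≤ S := integral_nonneg fun ω => sq_nonneg _
  rcases eq_or_lt_of_le hS with hS0 | hSpos
  · have hG0 : (fun ω => G ω ^ 2) =ᵐ[μ] 0 :=
      (integral_eq_zero_iff_of_nonneg (fun ω => sq_nonneg _) hG2).mp hS0.symm
    have hJ0 : J = 0 := by
      have : (fun ω => F ω * G ω) =ᵐ[μ] 0 := by
        filter_upwards [hG0] with ω hω
        have : G ω = 0 := by
          have := hω
          simp only [Pi.zero_apply] at this
          nlinarith [sq_nonneg (G ω)]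
        simp [this]
      simp [J, integral_congr_ae this]
    rw [hJ0, ← hS0]
    simp
  · have key : 0 ≤ ∫ ω, (S * F ω - J * G ω) ^ 2 ∂μ := integral_nonneg fun ω => sq_nonneg _
    have expand : (fun ω => (S * F ω - J * G ω) ^ 2) =
        fun ω => S ^ 2 * F ω ^ 2 - (2 * S * J) * (F ω * G ω) + J ^ 2 * G ω ^ 2 := by
      funext ω; ring
    rw [expand] at key
    have i1 : Integrable (fun ω => S ^ 2 * F ω ^ 2 - 2 * S * J * (F ω * G ω)) μ :=
      (hF2.const_mul _).sub (hFG.const_mul _)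
    have i2 : Integrable (fun ω => J ^ 2 * G ω ^ 2) μ := hG2.const_mul _
    rw [integral_add i1 i2, integral_sub (hF2.const_mul _) (hFG.const_mul _),
      integral_const_mul, integral_const_mul, integral_const_mul] at key
    nlinarith

lemma var_eq {F : Ω → ℝ} (hF : MemLp F 2 μ) (h0 : ∫ ω, F ω ∂μ = 0) :
    variance F μ = ∫ ω, F ω ^ 2 ∂μ := by
  rw [variance_eq_sub hF]
  have h2 : (μ[F ^ 2] : ℝ) = ∫ ω, F ω ^ 2 ∂μ := by
    apply integral_congr_ae
    filter_upwards with ω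
    simp
  rw [h2, h0]
  ring

lemma rset_nonneg {α β : Type*} [MeasurableSpace α] [MeasurableSpace β]
    {A : Ω → α} {B : Ω → β} : ∀ r ∈ rset μ A B, 0 ≤ r := by
  rintro r ⟨f, g, hf, hg, hf0, hg0, hvf, hmf, hvg, hmg, rfl⟩
  positivity

lemma rset_le_one {α β : Type*} [MeasurableSpace α] [MeasurableSpace β]
    {A : Ω → α} {B : Ω → β} (hA : Measurable A) (hB : Measurable B)
    (hAf : (Set.range A).Finite) (hBf : (Set.range B).Finite) :
    ∀ r ∈ rset μ A B, r ≤ 1 := by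
  rintro r ⟨f, g, hf, hg, hf0, hg0, hvf, hmf, hvg, hmg, rfl⟩
  rw [div_le_one (by positivity)]
  rw [var_eq hmf hf0, var_eq hmg hg0]
  exact cauchy hmf.integrable_sq hmg.integrable_sq
    (fin_int ((hf.comp hA).mul (hg.comp hB)) (fin_mul (fin_comp hAf f) (fin_comp hBf g)))

end Aux
noncomputable section L1sec

set_option linter.unusedSectionVars false

variable {Ω : Type*} [MeasurableSpace Ω] {μ : Measure Ω} [IsProbabilityMeasure μ]
variable {X Y : Ω → ℝ} {E : Ω → Bool} {δ e : ℝ}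

lemma int_ind (hE : Measurable E) (hδ0 : 0 ≤ δ) (hδ : μ (E ⁻¹' {true}) = ENNReal.ofReal δ) :
    ∫ ω, (if E ω = true then (1 : ℝ) else 0) ∂μ = δ := by
  have h : (fun ω => if E ω = true then (1 : ℝ) else 0)
      = (E ⁻¹' {true}).indicator (fun _ => (1 : ℝ)) := by
    funext ω
    by_cases h : E ω = true <;> simp [Set.indicator_apply, Set.mem_preimage, h]
  rw [h, integral_indicator_const (1 : ℝ) (hE (measurableSet_singleton true)), measureReal_def, hδ,
    ENNReal.toReal_ofReal hδ0, smul_eq_mul, mul_one]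

lemma L1 (hX : Measurable X) (hY : Measurable Y) (hE : Measurable E)
    (hYfin : (Set.range Y).Finite) (hXfin : (Set.range X).Finite)
    (hδ0 : 0 ≤ δ) (hδ : μ (E ⁻¹' {true}) = ENNReal.ofReal δ)
    (hind : IndepFun (fun ω => (X ω, Y ω)) E μ)
    (φ : ℝ × ℝ → ℝ) (hφ : Measurable φ) (g : ℝ → ℝ) (hg : Measurable g) :
    ∫ ω, φ (X ω, Y ω) * g (if E ω = true then e else Y ω) ∂μ
      = (1 - δ) * ∫ ω, φ (X ω, Y ω) * g (Y ω) ∂μ + δ * g e * ∫ ω, φ (X ω, Y ω) ∂μ := by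
  have hWm : Measurable fun ω => (X ω, Y ω) := hX.prodMk hY
  have hWfin : (Set.range fun ω => (X ω, Y ω)).Finite :=
    ((hXfin.prod hYfin)).subset (by rintro x ⟨ω, rfl⟩; exact ⟨⟨ω, rfl⟩, ⟨ω, rfl⟩⟩)
  have hφW : Measurable fun ω => φ (X ω, Y ω) := hφ.comp hWm
  have hφWfin : (Set.range fun ω => φ (X ω, Y ω)).Finite := fin_comp hWfin φ
  have hgY : Measurable fun ω => g (Y ω) := hg.comp hY
  have hgYfin : (Set.range fun ω => g (Y ω)).Finite := fin_comp hYfin g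
  have hEind : ∀ χ : Bool → ℝ,
      ∀ ψ : ℝ × ℝ → ℝ, Measurable ψ →
      ∫ ω, ψ (X ω, Y ω) * χ (E ω) ∂μ
        = (∫ ω, ψ (X ω, Y ω) ∂μ) * ∫ ω, χ (E ω) ∂μ := by
    intro χ ψ hψ
    have hi : IndepFun (fun ω => ψ (X ω, Y ω)) (fun ω => χ (E ω)) μ :=
      hind.comp hψ (Measurable.of_discrete (f := χ))
    have h := hi.integral_fun_mul_eq_mul_integral
      (fin_int (hψ.comp hWm) (fin_comp hWfin ψ)).aestronglyMeasurable
      (fin_int ((Measurable.of_discrete (f := χ)).comp hE) (fin_comp (Set.toFinite (Set.range E)) χ)).aestronglyMeasurable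
    exact h
  have key : ∀ ω, φ (X ω, Y ω) * g (if E ω = true then e else Y ω)
      = (φ (X ω, Y ω) * g (Y ω)) * (if E ω = true then (0 : ℝ) else 1)
        + g e * (φ (X ω, Y ω) * (if E ω = true then (1 : ℝ) else 0)) := by
    intro ω
    by_cases h : E ω = true <;> simp [h, mul_comm]
  have hint1 : Integrable (fun ω =>
      (φ (X ω, Y ω) * g (Y ω)) * (if E ω = true then (0 : ℝ) else 1)) μ :=
    fin_int ((hφW.mul hgY).mul ((Measurable.of_discrete
        (f := fun b : Bool => if b = true then (0:ℝ) else 1)).comp hE))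
      (fin_mul (fin_mul hφWfin hgYfin) (fin_comp (Set.toFinite (Set.range E))
        (fun b : Bool => if b = true then (0:ℝ) else 1)))
  have hint2 : Integrable (fun ω =>
      g e * (φ (X ω, Y ω) * (if E ω = true then (1 : ℝ) else 0))) μ :=
    (fin_int (hφW.mul ((Measurable.of_discrete
        (f := fun b : Bool => if b = true then (1:ℝ) else 0)).comp hE))
      (fin_mul hφWfin (fin_comp (Set.toFinite (Set.range E))
        (fun b : Bool => if b = true then (1:ℝ) else 0)))).const_mul _
  calc ∫ ω, φ (X ω, Y ω) * g (if E ω = true then e else Y ω) ∂μ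
      = ∫ ω, ((φ (X ω, Y ω) * g (Y ω)) * (if E ω = true then (0 : ℝ) else 1)
        + g e * (φ (X ω, Y ω) * (if E ω = true then (1 : ℝ) else 0))) ∂μ := by
        exact integral_congr_ae (Filter.Eventually.of_forall key)
    _ = (∫ ω, (φ (X ω, Y ω) * g (Y ω)) * (if E ω = true then (0 : ℝ) else 1) ∂μ)
        + g e * ∫ ω, φ (X ω, Y ω) * (if E ω = true then (1 : ℝ) else 0) ∂μ := by
        rw [integral_add hint1 hint2, integral_const_mul]
    _ = (∫ ω, φ (X ω, Y ω) * g (Y ω) ∂μ) * (∫ ω, (if E ω = true then (0 : ℝ) else 1) ∂μ)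
        + g e * ((∫ ω, φ (X ω, Y ω) ∂μ) * ∫ ω, (if E ω = true then (1 : ℝ) else 0) ∂μ) := by
        rw [hEind (fun b => if b = true then (0:ℝ) else 1) (fun p => φ p * g p.2)
          (hφ.mul (hg.comp measurable_snd)),
          hEind (fun b => if b = true then (1:ℝ) else 0) φ hφ]
    _ = (1 - δ) * ∫ ω, φ (X ω, Y ω) * g (Y ω) ∂μ + δ * g e * ∫ ω, φ (X ω, Y ω) ∂μ := by
        have h1 : ∫ ω, (if E ω = true then (1 : ℝ) else 0) ∂μ = δ := int_ind hE hδ0 hδ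
        have h0 : ∫ ω, (if E ω = true then (0 : ℝ) else 1) ∂μ = 1 - δ := by
          have he : (fun ω => if E ω = true then (0 : ℝ) else 1)
              = fun ω => 1 - (if E ω = true then (1 : ℝ) else 0) := by
            funext ω; by_cases h : E ω = true <;> simp [h]
          have hi1 : Integrable (fun ω => if E ω = true then (1:ℝ) else 0) μ :=
            fin_int ((Measurable.of_discrete
              (f := fun b : Bool => if b = true then (1:ℝ) else 0)).comp hE)
              (fin_comp (Set.toFinite (Set.range E))
                (fun b : Bool => if b = true then (1:ℝ) else 0))
          rw [he, integral_sub (integrable_const 1) hi1, integral_const, h1]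
          simp
        rw [h1, h0]; ring

end L1sec
noncomputable section Part1

set_option linter.unusedSectionVars false
set_option maxHeartbeats 1000000

variable {Ω : Type*} [MeasurableSpace Ω] {μ : Measure Ω} [IsProbabilityMeasure μ]
variable {X Y : Ω → ℝ} {E : Ω → Bool} {δ e : ℝ}

lemma var_eq' {F : Ω → ℝ} (hF : MemLp F 2 μ) :
    variance F μ = ∫ ω, F ω ^ 2 ∂μ - (∫ ω, F ω ∂μ) ^ 2 := by
  rw [variance_eq_sub hF]
  have h2 : (μ[F ^ 2] : ℝ) = ∫ ω, F ω ^ 2 ∂μ := by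
    apply integral_congr_ae; filter_upwards with ω; simp
  rw [h2]

/-- Upper bound ingredients packaged : for any admissible pair for `(·,Z)`. -/
lemma partYZ (hX : Measurable X) (hY : Measurable Y) (hE : Measurable E)
    (hYfin : (Set.range Y).Finite) (hXfin : (Set.range X).Finite)
    (he : ∀ ω, Y ω ≠ e)
    (hδ0 : 0 ≤ δ) (hδ1 : δ ≤ 1) (hδ : μ (E ⁻¹' {true}) = ENNReal.ofReal δ)
    (hind : IndepFun (fun ω => (X ω, Y ω)) E μ)
    (hv : 0 < variance Y μ) :
    rho2max μ Y (fun ω => if E ω = true then e else Y ω) = 1 - δ := by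
  have hZm : Measurable fun ω => if E ω = true then e else Y ω :=
    Measurable.ite (hE (measurableSet_singleton true)) measurable_const hY
  have hZfin : (Set.range fun ω => if E ω = true then e else Y ω).Finite := by
    apply (hYfin.union (Set.finite_singleton e)).subset
    rintro x ⟨ω, rfl⟩
    by_cases h : E ω = true
    · exact Or.inr (by simp [h])
    · exact Or.inl (by simp [h])
  rw [rho2max_eq_sSup]
  -- upper bound
  have hub : ∀ r ∈ rset μ Y (fun ω => if E ω = true then e else Y ω), r ≤ 1 - δ := by
    rintro r ⟨f, g, hf, hg, hf0, hg0, hvf, hmf, hvg, hmg, rfl⟩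
    simp only [] at hg0 hvg hmg ⊢
    set M := ∫ ω, g (Y ω) ∂μ with hM
    set Q := ∫ ω, g (Y ω) ^ 2 ∂μ with hQdef
    set P := ∫ ω, f (Y ω) ^ 2 ∂μ with hPdef
    set I := ∫ ω, f (Y ω) * g (Y ω) ∂μ with hIdef
    set a := g e with ha
    have intgY : Integrable (fun ω => g (Y ω)) μ :=
      fin_int (hg.comp hY) (fin_comp hYfin g)
    have intfY : Integrable (fun ω => f (Y ω)) μ :=
      fin_int (hf.comp hY) (fin_comp hYfin f)
    have intgY2 : Integrable (fun ω => g (Y ω) ^ 2) μ :=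
      fin_int ((hg.comp hY).pow_const 2) (fin_comp hYfin (fun y => g y ^ 2))
    have intfgY : Integrable (fun ω => f (Y ω) * g (Y ω)) μ :=
      fin_int ((hf.comp hY).mul (hg.comp hY)) (fin_comp hYfin (fun y => f y * g y))
    -- the three instances of L1
    have hJ : ∫ ω, f (Y ω) * g (if E ω = true then e else Y ω) ∂μ
        = (1 - δ) * I + δ * a * ∫ ω, f (Y ω) ∂μ :=
      L1 hX hY hE hYfin hXfin hδ0 hδ hind (fun p => f p.2) (hf.comp measurable_snd) g hg
    have hmean0 : ∫ ω, (1:ℝ) * g (if E ω = true then e else Y ω) ∂μ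
        = (1 - δ) * ∫ ω, (1:ℝ) * g (Y ω) ∂μ + δ * a * ∫ ω, (1:ℝ) ∂μ :=
      L1 hX hY hE hYfin hXfin hδ0 hδ hind (fun _ => 1) measurable_const g hg
    have hQ0 : ∫ ω, (1:ℝ) * g (if E ω = true then e else Y ω) ^ 2 ∂μ
        = (1 - δ) * ∫ ω, (1:ℝ) * g (Y ω) ^ 2 ∂μ + δ * a ^ 2 * ∫ ω, (1:ℝ) ∂μ :=
      L1 hX hY hE hYfin hXfin hδ0 hδ hind (fun _ => 1) measurable_const
        (fun y => g y ^ 2) (hg.pow_const 2)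
    simp only [one_mul, integral_const, measure_univ, probReal_univ, smul_eq_mul,
      mul_one] at hmean0 hQ0
    rw [hg0] at hmean0
    -- variance identities
    have hVf : variance (fun ω => f (Y ω)) μ = P := var_eq hmf hf0
    have hVg : variance (fun ω => g (if E ω = true then e else Y ω)) μ
        = (1 - δ) * Q + δ * a ^ 2 := by
      rw [var_eq hmg hg0, hQ0]
    -- Cauchy-Schwarz
    have intG2 : Integrable (fun ω => (g (Y ω) - M) ^ 2) μ :=
      fin_int (((hg.comp hY).sub measurable_const).pow_const 2)
        (fin_comp hYfin (fun y => (g y - M) ^ 2))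
    have intFG : Integrable (fun ω => f (Y ω) * (g (Y ω) - M)) μ :=
      fin_int ((hf.comp hY).mul ((hg.comp hY).sub measurable_const))
        (fin_comp hYfin (fun y => f y * (g y - M)))
    have hcs := cauchy (F := fun ω => f (Y ω)) (G := fun ω => g (Y ω) - M)
      hmf.integrable_sq intG2 intFG
    have e1 : ∫ ω, f (Y ω) * (g (Y ω) - M) ∂μ = I := by
      have h : (fun ω => f (Y ω) * (g (Y ω) - M)) =
          fun ω => f (Y ω) * g (Y ω) - M * f (Y ω) := funext fun ω => by ring
      rw [h, integral_sub intfgY (intfY.const_mul M), integral_const_mul, hf0]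
      simp
      rfl
    have e2 : ∫ ω, (g (Y ω) - M) ^ 2 ∂μ = Q - M ^ 2 := by
      have h : (fun ω => (g (Y ω) - M) ^ 2) =
          fun ω => (g (Y ω) ^ 2 - (2 * M) * g (Y ω)) + M ^ 2 := funext fun ω => by ring
      have i1 : Integrable (fun ω => g (Y ω) ^ 2 - (2 * M) * g (Y ω)) μ :=
        intgY2.sub (intgY.const_mul _)
      rw [h, integral_add i1 (integrable_const _), integral_sub intgY2 (intgY.const_mul _),
        integral_const_mul, integral_const]
      simp only [measure_univ, probReal_univ, smul_eq_mul, one_mul, ← hM, ← hQdef]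
      ring
    rw [e1, e2, ← hPdef] at hcs
    -- final inequality
    rw [hJ, hf0]
    simp only [mul_zero, add_zero]
    rw [hVf, hVg, div_le_iff₀ (by rw [← hVf, ← hVg]; positivity)]
    have hPnn : 0 ≤ P := integral_nonneg fun ω => sq_nonneg _
    have hstep : (1 - δ) * (Q - M ^ 2) ≤ (1 - δ) * Q + δ * a ^ 2 := by
      nlinarith [mul_nonneg (sub_nonneg.2 hδ1) (sq_nonneg M), mul_nonneg hδ0 (sq_nonneg a)]
    nlinarith [mul_le_mul_of_nonneg_left hcs (sq_nonneg (1 - δ)),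
      mul_le_mul_of_nonneg_left hstep (mul_nonneg (sub_nonneg.2 hδ1) hPnn),
      sq_nonneg ((1 - δ) * I)]
  rcases lt_or_eq_of_le hδ1 with hδlt | hδe
  -- case δ < 1 : exhibit the optimal pair
  · set m := ∫ ω, Y ω ∂μ with hm
    have intY : Integrable Y μ := fin_int hY hYfin
    have intY2 : Integrable (fun ω => Y ω ^ 2) μ :=
      fin_int (hY.pow_const 2) (fin_comp hYfin (fun y => y ^ 2))
    have hfm : Measurable fun y : ℝ => y - m := measurable_id'.sub measurable_const
    have hgm : Measurable fun y : ℝ => if y = e then 0 else y - m :=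
      Measurable.ite (measurableSet_singleton e) measurable_const hfm
    have hgY : (fun ω => (if Y ω = e then (0:ℝ) else Y ω - m)) = fun ω => Y ω - m := by
      funext ω; rw [if_neg (he ω)]
    have hfy0 : ∫ ω, (Y ω - m) ∂μ = 0 := by
      rw [integral_sub intY (integrable_const m), integral_const]
      simp [← hm]
    have hP : ∫ ω, (Y ω - m) ^ 2 ∂μ = variance Y μ := by
      rw [var_eq' (fin_memLp hY hYfin 2)]
      have h : (fun ω => (Y ω - m) ^ 2) =
          fun ω => (Y ω ^ 2 - (2 * m) * Y ω) + m ^ 2 := funext fun ω => by ring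
      have i1 : Integrable (fun ω => Y ω ^ 2 - (2 * m) * Y ω) μ :=
        intY2.sub (intY.const_mul _)
      rw [h, integral_add i1 (integrable_const _), integral_sub intY2 (intY.const_mul _),
        integral_const_mul, integral_const]
      simp only [measure_univ, probReal_univ, smul_eq_mul, one_mul, ← hm]
      ring
    set V := variance Y μ with hVdef
    -- the three L1 instances for this pair
    have hmean0 : ∫ ω, (1:ℝ) * (if (if E ω = true then e else Y ω) = e then (0:ℝ)
        else (if E ω = true then e else Y ω) - m) ∂μ
        = (1 - δ) * ∫ ω, (1:ℝ) * (if Y ω = e then (0:ℝ) else Y ω - m) ∂μ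
          + δ * (if e = e then (0:ℝ) else e - m) * ∫ ω, (1:ℝ) ∂μ :=
      L1 hX hY hE hYfin hXfin hδ0 hδ hind (fun _ => 1) measurable_const
        (fun y => if y = e then 0 else y - m) hgm
    have hsq0 : ∫ ω, (1:ℝ) * (if (if E ω = true then e else Y ω) = e then (0:ℝ)
        else (if E ω = true then e else Y ω) - m) ^ 2 ∂μ
        = (1 - δ) * ∫ ω, (1:ℝ) * (if Y ω = e then (0:ℝ) else Y ω - m) ^ 2 ∂μ
          + δ * (if e = e then (0:ℝ) else e - m) ^ 2 * ∫ ω, (1:ℝ) ∂μ :=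
      L1 hX hY hE hYfin hXfin hδ0 hδ hind (fun _ => 1) measurable_const
        (fun y => (if y = e then 0 else y - m) ^ 2) (hgm.pow_const 2)
    have hJ0 : ∫ ω, (Y ω - m) * (if (if E ω = true then e else Y ω) = e then (0:ℝ)
        else (if E ω = true then e else Y ω) - m) ∂μ
        = (1 - δ) * ∫ ω, (Y ω - m) * (if Y ω = e then (0:ℝ) else Y ω - m) ∂μ
          + δ * (if e = e then (0:ℝ) else e - m) * ∫ ω, (Y ω - m) ∂μ :=
      L1 hX hY hE hYfin hXfin hδ0 hδ hind (fun p => p.2 - m)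
        (measurable_snd.sub measurable_const) (fun y => if y = e then 0 else y - m) hgm
    have hgY2 : (fun ω => (if Y ω = e then (0:ℝ) else Y ω - m) ^ 2)
        = fun ω => (Y ω - m) ^ 2 := by funext ω; rw [if_neg (he ω)]
    have hgYmul : (fun ω => (Y ω - m) * (if Y ω = e then (0:ℝ) else Y ω - m))
        = fun ω => (Y ω - m) ^ 2 := by funext ω; rw [if_neg (he ω)]; ring
    simp only [one_mul, eq_self_iff_true, if_true, integral_const, measure_univ,
      probReal_univ, smul_eq_mul, mul_one, mul_zero, zero_mul, add_zero, zero_add,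
      hgY, hgY2, hgYmul] at hmean0 hsq0 hJ0
    rw [hfy0, mul_zero] at hmean0
    rw [hP] at hsq0 hJ0
    have hzp : (0:ℝ) ^ 2 = 0 := by norm_num
    rw [hzp, mul_zero, add_zero] at hsq0
    -- assemble membership
    have hmfY : MemLp (fun ω => Y ω - m) 2 μ :=
      fin_memLp (hY.sub measurable_const) (fin_comp hYfin (fun y => y - m)) 2
    have hmgZ : MemLp (fun ω => if (if E ω = true then e else Y ω) = e then (0:ℝ)
        else (if E ω = true then e else Y ω) - m) 2 μ :=
      fin_memLp (hgm.comp hZm) (fin_comp hZfin (fun y => if y = e then 0 else y - m)) 2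
    have hmem : (1 - δ) ∈ rset μ Y (fun ω => if E ω = true then e else Y ω) := by
      refine ⟨fun y => y - m, fun y => if y = e then 0 else y - m, hfm, hgm, hfy0, hmean0,
        ?_, hmfY, ?_, hmgZ, ?_⟩
      · show 0 < variance (fun ω => Y ω - m) μ
        rw [var_eq hmfY hfy0, hP]
        exact hv
      · show 0 < variance (fun ω => if (if E ω = true then e else Y ω) = e then (0:ℝ)
          else (if E ω = true then e else Y ω) - m) μ
        rw [var_eq hmgZ hmean0, hsq0]
        exact mul_pos (by linarith) hv
      · show (1 - δ) = (∫ ω, (Y ω - m) * (if (if E ω = true then e else Y ω) = e then (0:ℝ)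
          else (if E ω = true then e else Y ω) - m) ∂μ) ^ 2 /
          (variance (fun ω => Y ω - m) μ * variance (fun ω => if (if E ω = true then e
          else Y ω) = e then (0:ℝ) else (if E ω = true then e else Y ω) - m) μ)
        rw [var_eq hmfY hfy0, hP, var_eq hmgZ hmean0, hsq0, hJ0]
        have h1δ : (0:ℝ) < 1 - δ := by linarith
        rw [eq_div_iff (ne_of_gt (mul_pos hv (mul_pos h1δ hv)))]
        ring
    exact le_antisymm (Real.sSup_le hub (by linarith)) (le_csSup ⟨1 - δ, hub⟩ hmem)
  -- case δ = 1 : the set is empty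
  · have hempty : rset μ Y (fun ω => if E ω = true then e else Y ω) = ∅ := by
      ext r
      simp only [Set.mem_empty_iff_false, iff_false]
      rintro ⟨f, g, hf, hg, hf0, hg0, hvf, hmf, hvg, hmg, -⟩
      have hmean0 : ∫ ω, (1:ℝ) * g (if E ω = true then e else Y ω) ∂μ
          = (1 - δ) * ∫ ω, (1:ℝ) * g (Y ω) ∂μ + δ * g e * ∫ ω, (1:ℝ) ∂μ :=
        L1 hX hY hE hYfin hXfin hδ0 hδ hind (fun _ => 1) measurable_const g hg
      have hQ0 : ∫ ω, (1:ℝ) * g (if E ω = true then e else Y ω) ^ 2 ∂μ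
          = (1 - δ) * ∫ ω, (1:ℝ) * g (Y ω) ^ 2 ∂μ + δ * g e ^ 2 * ∫ ω, (1:ℝ) ∂μ :=
        L1 hX hY hE hYfin hXfin hδ0 hδ hind (fun _ => 1) measurable_const
          (fun y => g y ^ 2) (hg.pow_const 2)
      simp only [] at hg0 hvg hmg
      subst hδe
      simp only [one_mul, integral_const, measure_univ, probReal_univ, smul_eq_mul,
        mul_one, sub_self, zero_mul, zero_add] at hmean0 hQ0
      rw [hg0] at hmean0
      -- hmean0 : 0 = g e
      have hVg := var_eq hmg hg0
      rw [hQ0, ← hmean0] at hVg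
      simp only [ne_eq, OfNat.ofNat_ne_zero, not_false_eq_true, zero_pow, mul_zero] at hVg
      rw [hVg] at hvg
      exact lt_irrefl _ hvg
    subst hδe
    rw [hempty, Real.sSup_empty]
    ring

end Part1
noncomputable section Part2

set_option linter.unusedSectionVars false
set_option maxHeartbeats 1000000

variable {Ω : Type*} [MeasurableSpace Ω] {μ : Measure Ω} [IsProbabilityMeasure μ]
variable {X Y : Ω → ℝ} {E : Ω → Bool} {δ e : ℝ}

lemma partXZ (hX : Measurable X) (hY : Measurable Y) (hE : Measurable E)
    (hYfin : (Set.range Y).Finite) (hXfin : (Set.range X).Finite)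
    (he : ∀ ω, Y ω ≠ e)
    (hδ0 : 0 ≤ δ) (hδ1 : δ ≤ 1) (hδ : μ (E ⁻¹' {true}) = ENNReal.ofReal δ)
    (hind : IndepFun (fun ω => (X ω, Y ω)) E μ) :
    rho2max μ X (fun ω => if E ω = true then e else Y ω)
      = (1 - δ) * rho2max μ X Y := by
  have hZm : Measurable fun ω => if E ω = true then e else Y ω :=
    Measurable.ite (hE (measurableSet_singleton true)) measurable_const hY
  have hZfin : (Set.range fun ω => if E ω = true then e else Y ω).Finite := by
    apply (hYfin.union (Set.finite_singleton e)).subset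
    rintro x ⟨ω, rfl⟩
    by_cases h : E ω = true
    · exact Or.inr (by simp [h])
    · exact Or.inl (by simp [h])
  rw [rho2max_eq_sSup, rho2max_eq_sSup]
  have bddXY : BddAbove (rset μ X Y) := ⟨1, rset_le_one hX hY hXfin hYfin⟩
  have bddXZ : BddAbove (rset μ X (fun ω => if E ω = true then e else Y ω)) :=
    ⟨1, rset_le_one hX hZm hXfin hZfin⟩
  have hXYnn : 0 ≤ sSup (rset μ X Y) := Real.sSup_nonneg rset_nonneg
  have h1δ0 : (0:ℝ) ≤ 1 - δ := by linarith
  -- upper bound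
  have hub : ∀ r ∈ rset μ X (fun ω => if E ω = true then e else Y ω),
      r ≤ (1 - δ) * sSup (rset μ X Y) := by
    rintro r ⟨f, g, hf, hg, hf0, hg0, hvf, hmf, hvg, hmg, rfl⟩
    simp only [] at hg0 hvg hmg ⊢
    set M := ∫ ω, g (Y ω) ∂μ with hM
    set Q := ∫ ω, g (Y ω) ^ 2 ∂μ with hQdef
    set P := ∫ ω, f (X ω) ^ 2 ∂μ with hPdef
    set I := ∫ ω, f (X ω) * g (Y ω) ∂μ with hIdef
    set a := g e with ha
    have intgY : Integrable (fun ω => g (Y ω)) μ :=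
      fin_int (hg.comp hY) (fin_comp hYfin g)
    have intfX : Integrable (fun ω => f (X ω)) μ :=
      fin_int (hf.comp hX) (fin_comp hXfin f)
    have intgY2 : Integrable (fun ω => g (Y ω) ^ 2) μ :=
      fin_int ((hg.comp hY).pow_const 2) (fin_comp hYfin (fun y => g y ^ 2))
    have intfgXY : Integrable (fun ω => f (X ω) * g (Y ω)) μ :=
      fin_int ((hf.comp hX).mul (hg.comp hY)) (fin_mul (fin_comp hXfin f) (fin_comp hYfin g))
    have hJ : ∫ ω, f (X ω) * g (if E ω = true then e else Y ω) ∂μ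
        = (1 - δ) * I + δ * a * ∫ ω, f (X ω) ∂μ :=
      L1 hX hY hE hYfin hXfin hδ0 hδ hind (fun p => f p.1) (hf.comp measurable_fst) g hg
    have hmean0 : ∫ ω, (1:ℝ) * g (if E ω = true then e else Y ω) ∂μ
        = (1 - δ) * ∫ ω, (1:ℝ) * g (Y ω) ∂μ + δ * a * ∫ ω, (1:ℝ) ∂μ :=
      L1 hX hY hE hYfin hXfin hδ0 hδ hind (fun _ => 1) measurable_const g hg
    have hQ0 : ∫ ω, (1:ℝ) * g (if E ω = true then e else Y ω) ^ 2 ∂μ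
        = (1 - δ) * ∫ ω, (1:ℝ) * g (Y ω) ^ 2 ∂μ + δ * a ^ 2 * ∫ ω, (1:ℝ) ∂μ :=
      L1 hX hY hE hYfin hXfin hδ0 hδ hind (fun _ => 1) measurable_const
        (fun y => g y ^ 2) (hg.pow_const 2)
    simp only [one_mul, integral_const, measure_univ, probReal_univ, smul_eq_mul,
      mul_one] at hmean0 hQ0
    have hVf : variance (fun ω => f (X ω)) μ = P := var_eq hmf hf0
    have hVg : variance (fun ω => g (if E ω = true then e else Y ω)) μ
        = (1 - δ) * Q + δ * a ^ 2 := by rw [var_eq hmg hg0, hQ0]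
    have hGfin : (Set.range fun ω => g (Y ω) - M).Finite :=
      fin_comp hYfin (fun y => g y - M)
    have hG2fin : (Set.range fun ω => (g (Y ω) - M) ^ 2).Finite :=
      fin_comp hYfin (fun y => (g y - M) ^ 2)
    have hFGfin : (Set.range fun ω => f (X ω) * (g (Y ω) - M)).Finite :=
      fin_mul (fin_comp hXfin f) hGfin
    have intG2 : Integrable (fun ω => (g (Y ω) - M) ^ 2) μ :=
      fin_int (((hg.comp hY).sub measurable_const).pow_const 2) hG2fin
    have intFG : Integrable (fun ω => f (X ω) * (g (Y ω) - M)) μ :=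
      fin_int ((hf.comp hX).mul ((hg.comp hY).sub measurable_const)) hFGfin
    have hcs := cauchy (F := fun ω => f (X ω)) (G := fun ω => g (Y ω) - M)
      hmf.integrable_sq intG2 intFG
    have e1 : ∫ ω, f (X ω) * (g (Y ω) - M) ∂μ = I := by
      have h : (fun ω => f (X ω) * (g (Y ω) - M)) =
          fun ω => f (X ω) * g (Y ω) - M * f (X ω) := funext fun ω => by ring
      rw [h, integral_sub intfgXY (intfX.const_mul M), integral_const_mul, hf0]
      simp
      rfl
    have e2 : ∫ ω, (g (Y ω) - M) ^ 2 ∂μ = Q - M ^ 2 := by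
      have h : (fun ω => (g (Y ω) - M) ^ 2) =
          fun ω => (g (Y ω) ^ 2 - (2 * M) * g (Y ω)) + M ^ 2 := funext fun ω => by ring
      have i1 : Integrable (fun ω => g (Y ω) ^ 2 - (2 * M) * g (Y ω)) μ :=
        intgY2.sub (intgY.const_mul _)
      rw [h, integral_add i1 (integrable_const _), integral_sub intgY2 (intgY.const_mul _),
        integral_const_mul, integral_const]
      simp only [measure_univ, probReal_univ, smul_eq_mul, one_mul, ← hM, ← hQdef]
      ring
    rw [e1, e2, ← hPdef] at hcs
    have hVGnn : 0 ≤ Q - M ^ 2 := e2 ▸ integral_nonneg fun ω => sq_nonneg _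
    have hPpos : 0 < P := hVf ▸ hvf
    have hVzpos : 0 < (1 - δ) * Q + δ * a ^ 2 := hVg ▸ hvg
    have hstep : (1 - δ) * (Q - M ^ 2) ≤ (1 - δ) * Q + δ * a ^ 2 := by
      nlinarith [mul_nonneg h1δ0 (sq_nonneg M), mul_nonneg hδ0 (sq_nonneg a)]
    rw [hJ, hf0]
    simp only [mul_zero, add_zero]
    rw [hVf, hVg]
    rcases eq_or_lt_of_le hVGnn with hQM | hQM
    · -- degenerate: g(Y) essentially constant, numerator vanishes
      have hI : I = 0 := by nlinarith [sq_nonneg I]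
      rw [hI]
      simp only [mul_zero, ne_eq, OfNat.ofNat_ne_zero, not_false_eq_true, zero_pow,
        zero_div]
      exact mul_nonneg h1δ0 hXYnn
    · -- main case : compare with the member for (X,Y)
      have hg'0 : ∫ ω, (g (Y ω) - M) ∂μ = 0 := by
        rw [integral_sub intgY (integrable_const M), integral_const]
        simp [← hM]
      have hmg' : MemLp (fun ω => g (Y ω) - M) 2 μ :=
        fin_memLp ((hg.comp hY).sub measurable_const) hGfin 2
      have hVg' : variance (fun ω => g (Y ω) - M) μ = Q - M ^ 2 := by
        rw [var_eq hmg' hg'0, e2]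
      have hmem : I ^ 2 / (P * (Q - M ^ 2)) ∈ rset μ X Y := by
        refine ⟨f, fun y => g y - M, hf, hg.sub measurable_const, hf0, hg'0, hvf, hmf,
          ?_, hmg', ?_⟩
        · show 0 < variance (fun ω => g (Y ω) - M) μ
          rw [hVg']; exact hQM
        · show I ^ 2 / (P * (Q - M ^ 2))
            = (∫ ω, f (X ω) * (g (Y ω) - M) ∂μ) ^ 2 /
              (variance (fun ω => f (X ω)) μ * variance (fun ω => g (Y ω) - M) μ)
          rw [e1, hVf, hVg']
      have hsle : I ^ 2 / (P * (Q - M ^ 2)) ≤ sSup (rset μ X Y) := le_csSup bddXY hmem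
      have key : ((1 - δ) * I) ^ 2 / (P * ((1 - δ) * Q + δ * a ^ 2))
          ≤ (1 - δ) * (I ^ 2 / (P * (Q - M ^ 2))) := by
        rw [mul_div_assoc' (1 - δ), div_le_div_iff₀ (by positivity) (by positivity)]
        nlinarith [mul_le_mul_of_nonneg_left hstep
          (mul_nonneg (mul_nonneg h1δ0 (sq_nonneg I)) hPpos.le)]
      exact key.trans (mul_le_mul_of_nonneg_left hsle h1δ0)
  -- lower bound
  have hlb : (1 - δ) * sSup (rset μ X Y)
      ≤ sSup (rset μ X (fun ω => if E ω = true then e else Y ω)) := by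
    have hXZnn : 0 ≤ sSup (rset μ X (fun ω => if E ω = true then e else Y ω)) :=
      Real.sSup_nonneg rset_nonneg
    rcases lt_or_eq_of_le hδ1 with hδlt | hδe
    · have h1δ : (0:ℝ) < 1 - δ := by linarith
      have hle : sSup (rset μ X Y)
          ≤ sSup (rset μ X (fun ω => if E ω = true then e else Y ω)) / (1 - δ) := by
        apply Real.sSup_le _ (div_nonneg hXZnn h1δ.le)
        rintro s ⟨f, g, hf, hg, hf0, hg0, hvf, hmf, hvg, hmg, rfl⟩
        set I := ∫ ω, f (X ω) * g (Y ω) ∂μ with hIdef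
        set Pv := variance (fun ω => f (X ω)) μ with hPv
        set VG := variance (fun ω => g (Y ω)) μ with hVG
        have hgm : Measurable fun y : ℝ => if y = e then (0:ℝ) else g y :=
          Measurable.ite (measurableSet_singleton e) measurable_const hg
        have hgY' : (fun ω => (if Y ω = e then (0:ℝ) else g (Y ω))) = fun ω => g (Y ω) := by
          funext ω; rw [if_neg (he ω)]
        have hgYmul : (fun ω => f (X ω) * (if Y ω = e then (0:ℝ) else g (Y ω)))
            = fun ω => f (X ω) * g (Y ω) := by
          funext ω; rw [if_neg (he ω)]
        have hgY2 : (fun ω => (if Y ω = e then (0:ℝ) else g (Y ω)) ^ 2)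
            = fun ω => g (Y ω) ^ 2 := by funext ω; rw [if_neg (he ω)]
        have hmean0 : ∫ ω, (1:ℝ) * (if (if E ω = true then e else Y ω) = e then (0:ℝ)
            else g (if E ω = true then e else Y ω)) ∂μ
            = (1 - δ) * ∫ ω, (1:ℝ) * (if Y ω = e then (0:ℝ) else g (Y ω)) ∂μ
              + δ * (if e = e then (0:ℝ) else g e) * ∫ ω, (1:ℝ) ∂μ :=
          L1 hX hY hE hYfin hXfin hδ0 hδ hind (fun _ => 1) measurable_const
            (fun y => if y = e then 0 else g y) hgm
        have hsq0 : ∫ ω, (1:ℝ) * (if (if E ω = true then e else Y ω) = e then (0:ℝ)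
            else g (if E ω = true then e else Y ω)) ^ 2 ∂μ
            = (1 - δ) * ∫ ω, (1:ℝ) * (if Y ω = e then (0:ℝ) else g (Y ω)) ^ 2 ∂μ
              + δ * (if e = e then (0:ℝ) else g e) ^ 2 * ∫ ω, (1:ℝ) ∂μ :=
          L1 hX hY hE hYfin hXfin hδ0 hδ hind (fun _ => 1) measurable_const
            (fun y => (if y = e then 0 else g y) ^ 2) (hgm.pow_const 2)
        have hJ0 : ∫ ω, f (X ω) * (if (if E ω = true then e else Y ω) = e then (0:ℝ)
            else g (if E ω = true then e else Y ω)) ∂μ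
            = (1 - δ) * ∫ ω, f (X ω) * (if Y ω = e then (0:ℝ) else g (Y ω)) ∂μ
              + δ * (if e = e then (0:ℝ) else g e) * ∫ ω, f (X ω) ∂μ :=
          L1 hX hY hE hYfin hXfin hδ0 hδ hind (fun p => f p.1) (hf.comp measurable_fst)
            (fun y => if y = e then 0 else g y) hgm
        simp only [one_mul, eq_self_iff_true, if_true, integral_const, measure_univ,
          probReal_univ, smul_eq_mul, mul_one, mul_zero, zero_mul, add_zero, zero_add,
          hgY', hgY2, hgYmul] at hmean0 hsq0 hJ0
        rw [hg0, mul_zero] at hmean0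
        have hzp : (0:ℝ) ^ 2 = 0 := by norm_num
        rw [hzp, mul_zero, add_zero] at hsq0
        have hVGeq : ∫ ω, g (Y ω) ^ 2 ∂μ = VG := (var_eq hmg hg0).symm
        rw [hVGeq] at hsq0
        have hmgZ : MemLp (fun ω => if (if E ω = true then e else Y ω) = e then (0:ℝ)
            else g (if E ω = true then e else Y ω)) 2 μ :=
          fin_memLp (hgm.comp hZm) (fin_comp hZfin (fun y => if y = e then 0 else g y)) 2
        have hVGpos : 0 < VG := hvg
        have hPvpos : 0 < Pv := hvf
        have hmem : ((1 - δ) * I) ^ 2 / (Pv * ((1 - δ) * VG))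
            ∈ rset μ X (fun ω => if E ω = true then e else Y ω) := by
          refine ⟨f, fun y => if y = e then 0 else g y, hf, hgm, hf0, hmean0, hvf, hmf,
            ?_, hmgZ, ?_⟩
          · show 0 < variance (fun ω => if (if E ω = true then e else Y ω) = e then (0:ℝ)
              else g (if E ω = true then e else Y ω)) μ
            rw [var_eq hmgZ hmean0, hsq0]
            exact mul_pos h1δ hVGpos
          · show ((1 - δ) * I) ^ 2 / (Pv * ((1 - δ) * VG))
              = (∫ ω, f (X ω) * (if (if E ω = true then e else Y ω) = e then (0:ℝ)
                else g (if E ω = true then e else Y ω)) ∂μ) ^ 2 /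
                (variance (fun ω => f (X ω)) μ *
                  variance (fun ω => if (if E ω = true then e else Y ω) = e then (0:ℝ)
                    else g (if E ω = true then e else Y ω)) μ)
            rw [hJ0, var_eq hmgZ hmean0, hsq0, ← hPv]
        have hql := le_csSup bddXZ hmem
        rw [le_div_iff₀ h1δ]
        have hqeq : ((1 - δ) * I) ^ 2 / (Pv * ((1 - δ) * VG))
            = I ^ 2 / (Pv * VG) * (1 - δ) := by
          field_simp
        rw [← hqeq]
        exact hql
      calc (1 - δ) * sSup (rset μ X Y)
          ≤ (1 - δ) * (sSup (rset μ X (fun ω => if E ω = true then e else Y ω)) / (1 - δ)) :=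
            mul_le_mul_of_nonneg_left hle h1δ.le
        _ = sSup (rset μ X (fun ω => if E ω = true then e else Y ω)) := by
            field_simp
    · rw [← hδe]
      simp [hXZnn]
  exact le_antisymm (Real.sSup_le hub (mul_nonneg h1δ0 hXYnn)) hlb

end Part2
/-- For the erasure channel `Z_δ` of `Y` (erasure symbol `e` outside the range of `Y`,
erasure event independent of `(X,Y)`): `ρ_m²(Y;Z_δ) = 1 - δ` and, with `X–Y–Z_δ` Markov,
`ρ_m²(X;Z_δ) = (1-δ) ρ_m²(X;Y)`. -/
theorem stmt9 {Ω : Type*} [MeasurableSpace Ω] (μ : Measure Ω) [IsProbabilityMeasure μ]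
    (X Y : Ω → ℝ) (E : Ω → Bool) (δ e : ℝ)
    (hX : Measurable X) (hY : Measurable Y) (hE : Measurable E)
    (hYfin : Set.Finite (Set.range Y)) (hXfin : Set.Finite (Set.range X))
    (he : ∀ ω, Y ω ≠ e)
    (hδ0 : 0 ≤ δ) (hδ1 : δ ≤ 1) (hδ : μ (E ⁻¹' {true}) = ENNReal.ofReal δ)
    (hind : IndepFun (fun ω => (X ω, Y ω)) E μ)
    (hv : 0 < variance Y μ) :
    rho2max μ Y (fun ω => if E ω = true then e else Y ω) = 1 - δ ∧
    rho2max μ X (fun ω => if E ω = true then e else Y ω) = (1 - δ) * rho2max μ X Y := by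
  exact ⟨partYZ hX hY hE hYfin hXfin he hδ0 hδ1 hδ hind hv,
    partXZ hX hY hE hYfin hXfin he hδ0 hδ1 hδ hind⟩
end

section
/- Let Y ~ Bernoulli(p), X take values in {±1, ±2, ..., ±k}, and suppose P_{X|Y} is a BISO channel (P_{X|Y}(x|1) = P_{X|Y}(-x|0) for all x). Then for any Z with X–Y–Z a Markov chain, mmse(Y|Z) = (mmse(X|Z) - var(X|Y=1)) / (4 E[X|Y=1]^2), provided E[X|Y=1] ≠ 0. -/
open MeasureTheory ProbabilityTheory

section AuxHelpers

variable {Ω : Type*} [MeasurableSpace Ω]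

lemma aux_int (μ : Measure Ω) [IsFiniteMeasure μ] {f : Ω → ℝ} (hf : AEStronglyMeasurable f μ)
    (C : ℝ) (h : ∀ᵐ ω ∂μ, |f ω| ≤ C) : Integrable f μ :=
  Integrable.mono' (integrable_const C) hf (by simpa [Real.norm_eq_abs] using h)

lemma aux_memLp (μ : Measure Ω) [IsFiniteMeasure μ] {f : Ω → ℝ} (hf : AEStronglyMeasurable f μ)
    (C : ℝ) (h : ∀ᵐ ω ∂μ, |f ω| ≤ C) : MemLp f 2 μ :=
  MemLp.of_bound hf C (by simpa [Real.norm_eq_abs] using h)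

lemma aux_sum_integral (μ : Measure Ω) [IsFiniteMeasure μ]
    {X : Ω → ℝ} (hX : Measurable X) (S : Finset ℝ) (hS : ∀ ω, X ω ∈ S)
    {A : Set Ω} (hA : MeasurableSet A) (φ : ℝ → ℝ) :
    ∫ ω in A, φ (X ω) ∂μ = ∑ x ∈ S, φ x * (μ (X ⁻¹' {x} ∩ A)).toReal := by
  have hfun : ∀ ω, φ (X ω) = ∑ x ∈ S, Set.indicator (X ⁻¹' {x}) (fun _ => φ x) ω := by
    intro ω
    rw [Finset.sum_eq_single (X ω)]
    · simp
    · intro b _ hb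
      apply Set.indicator_of_notMem
      simp only [Set.mem_preimage, Set.mem_singleton_iff]
      exact fun h => hb h.symm
    · intro h; exact absurd (hS ω) h
  calc ∫ ω in A, φ (X ω) ∂μ
      = ∫ ω in A, ∑ x ∈ S, Set.indicator (X ⁻¹' {x}) (fun _ => φ x) ω ∂μ := by
        exact integral_congr_ae (Filter.Eventually.of_forall (fun ω => hfun ω))
    _ = ∑ x ∈ S, ∫ ω in A, Set.indicator (X ⁻¹' {x}) (fun _ => φ x) ω ∂μ := by
        refine integral_finset_sum S (fun x _ => ?_)
        exact ((integrable_const (φ x)).indicator (hX (measurableSet_singleton x))).integrableOn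
    _ = ∑ x ∈ S, φ x * (μ (X ⁻¹' {x} ∩ A)).toReal := by
        refine Finset.sum_congr rfl (fun x _ => ?_)
        rw [setIntegral_indicator (hX (measurableSet_singleton x)), setIntegral_const]
        rw [Set.inter_comm, smul_eq_mul, mul_comm]
        rfl

lemma aux_split (μ : Measure Ω) {Y : Ω → ℝ} (hY : Measurable Y)
    (hYval : ∀ ω, Y ω = 0 ∨ Y ω = 1) {f : Ω → ℝ} (hf : IntegrableOn f Set.univ μ)
    {A : Set Ω} (hA : MeasurableSet A) :
    ∫ ω in A, f ω ∂μ = ∫ ω in A ∩ Y ⁻¹' {1}, f ω ∂μ + ∫ ω in A ∩ Y ⁻¹' {0}, f ω ∂μ := by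
  have hU : A = (A ∩ Y ⁻¹' {1}) ∪ (A ∩ Y ⁻¹' {0}) := by
    ext ω; simp only [Set.mem_union, Set.mem_inter_iff, Set.mem_preimage, Set.mem_singleton_iff]
    rcases hYval ω with h | h <;> tauto
  have hdisj : Disjoint (A ∩ Y ⁻¹' {1}) (A ∩ Y ⁻¹' {0}) := by
    rw [Set.disjoint_left]
    rintro ω ⟨-, h1⟩ ⟨-, h0⟩
    simp only [Set.mem_preimage, Set.mem_singleton_iff] at h1 h0
    norm_num [h1] at h0
  conv_lhs => rw [hU]
  exact setIntegral_union hdisj (hA.inter (hY (measurableSet_singleton 0)))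
    (hf.mono_set (Set.subset_univ _)) (hf.mono_set (Set.subset_univ _))

lemma aux_condexp_comapY (μ : Measure Ω) [IsProbabilityMeasure μ] {Y : Ω → ℝ} (hY : Measurable Y)
    (hYval : ∀ ω, Y ω = 0 ∨ Y ω = 1) {f g : Ω → ℝ} (hf : Integrable f μ) (hg : Integrable g μ)
    (hgm : AEStronglyMeasurable[MeasurableSpace.comap Y inferInstance] g μ)
    (h1 : ∫ ω in Y ⁻¹' {1}, g ω ∂μ = ∫ ω in Y ⁻¹' {1}, f ω ∂μ)
    (h0 : ∫ ω in Y ⁻¹' {0}, g ω ∂μ = ∫ ω in Y ⁻¹' {0}, f ω ∂μ) :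
    g =ᵐ[μ] μ[f | MeasurableSpace.comap Y inferInstance] := by
  refine ae_eq_condExp_of_forall_setIntegral_eq hY.comap_le hf
    (fun s _ _ => hg.integrableOn) ?_ hgm
  rintro s ⟨t, ht, rfl⟩ -
  rw [aux_split μ hY hYval hg.integrableOn (hY ht),
    aux_split μ hY hYval hf.integrableOn (hY ht)]
  have key : ∀ c : ℝ, Y ⁻¹' t ∩ Y ⁻¹' {c} = Y ⁻¹' (t ∩ {c}) := fun c => by
    rw [Set.preimage_inter]
  have e1 : (1:ℝ) ∈ t → t ∩ {(1:ℝ)} = {1} :=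
    fun h => Set.inter_eq_right.mpr (Set.singleton_subset_iff.mpr h)
  have e0 : (0:ℝ) ∈ t → t ∩ {(0:ℝ)} = {0} :=
    fun h => Set.inter_eq_right.mpr (Set.singleton_subset_iff.mpr h)
  have n1 : (1:ℝ) ∉ t → t ∩ {(1:ℝ)} = ∅ := fun h => by
    ext x; simp only [Set.mem_inter_iff, Set.mem_singleton_iff, Set.mem_empty_iff_false,
      iff_false, not_and]; rintro hx rfl; exact h hx
  have n0 : (0:ℝ) ∉ t → t ∩ {(0:ℝ)} = ∅ := fun h => by
    ext x; simp only [Set.mem_inter_iff, Set.mem_singleton_iff, Set.mem_empty_iff_false,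
      iff_false, not_and]; rintro hx rfl; exact h hx
  by_cases h1t : (1:ℝ) ∈ t <;> by_cases h0t : (0:ℝ) ∈ t
  · rw [key 1, key 0, e1 h1t, e0 h0t, h1, h0]
  · rw [key 1, key 0, e1 h1t, n0 h0t, h1]; simp
  · rw [key 1, key 0, n1 h1t, e0 h0t, h0]; simp
  · rw [key 1, key 0, n1 h1t, n0 h0t]; simp

lemma aux_condexp_ind (μ : Measure Ω) [IsProbabilityMeasure μ] {Y : Ω → ℝ} (hY : Measurable Y)
    (hYval : ∀ ω, Y ω = 0 ∨ Y ω = 1) (hp1 : μ (Y ⁻¹' {1}) ≠ 0) (hp0 : μ (Y ⁻¹' {0}) ≠ 0)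
    {A : Set Ω} (hA : MeasurableSet A) :
    (μ⟦A | MeasurableSpace.comap Y inferInstance⟧) =ᵐ[μ]
      fun ω => (μ (A ∩ Y ⁻¹' {1})).toReal / (μ (Y ⁻¹' {1})).toReal * Y ω
        + (μ (A ∩ Y ⁻¹' {0})).toReal / (μ (Y ⁻¹' {0})).toReal * (1 - Y ω) := by
  set c1 : ℝ := (μ (A ∩ Y ⁻¹' {1})).toReal / (μ (Y ⁻¹' {1})).toReal with hc1
  set c0 : ℝ := (μ (A ∩ Y ⁻¹' {0})).toReal / (μ (Y ⁻¹' {0})).toReal with hc0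
  have hgval : ∀ ω, (if Y ω = 1 then c1 else c0) = c1 * Y ω + c0 * (1 - Y ω) := by
    intro ω; rcases hYval ω with h | h <;> simp [h]
  refine (aux_condexp_comapY μ hY hYval ((integrable_const (1:ℝ)).indicator hA) ?_ ?_ ?_ ?_).symm
  · -- integrable
    refine aux_int μ ?_ (max |c1| |c0|) (Filter.Eventually.of_forall fun ω => ?_)
    · exact ((measurable_const.mul hY).add
        (measurable_const.mul (measurable_const.sub hY))).aestronglyMeasurable
    · rcases hYval ω with h | h <;> simp [h, le_max_left, le_max_right, abs_le, le_abs_self,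
        neg_abs_le]
  · -- AEStronglyMeasurable'
    have hYm : Measurable[MeasurableSpace.comap Y inferInstance] Y :=
      measurable_iff_comap_le.mpr le_rfl
    exact StronglyMeasurable.aestronglyMeasurable
      (((measurable_const.mul hYm).add
        (measurable_const.mul (measurable_const.sub hYm))).stronglyMeasurable)
  · -- integral over Y⁻¹'{1}
    rw [setIntegral_indicator hA]
    rw [setIntegral_congr_fun (hY (measurableSet_singleton 1))
      (g := fun _ => c1) (fun ω hω => by
        simp only [Set.mem_preimage, Set.mem_singleton_iff] at hω
        rw [← hgval ω, if_pos hω])]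
    rw [setIntegral_const, setIntegral_const, measureReal_def, measureReal_def, smul_eq_mul, smul_eq_mul, mul_one, hc1, mul_comm,
      div_mul_cancel₀ _ (ENNReal.toReal_ne_zero.mpr ⟨hp1, measure_ne_top μ _⟩), Set.inter_comm]
  · -- integral over Y⁻¹'{0}
    rw [setIntegral_indicator hA]
    rw [setIntegral_congr_fun (hY (measurableSet_singleton 0))
      (g := fun _ => c0) (fun ω hω => by
        simp only [Set.mem_preimage, Set.mem_singleton_iff] at hω
        rw [← hgval ω, if_neg (by rw [hω]; norm_num)])]
    rw [setIntegral_const, setIntegral_const, measureReal_def, measureReal_def, smul_eq_mul, smul_eq_mul, mul_one, hc0, mul_comm,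
      div_mul_cancel₀ _ (ENNReal.toReal_ne_zero.mpr ⟨hp0, measure_ne_top μ _⟩), Set.inter_comm]

lemma aux_factor (μ : Measure Ω) [IsProbabilityMeasure μ] {Y : Ω → ℝ} (hY : Measurable Y)
    (hYval : ∀ ω, Y ω = 0 ∨ Y ω = 1) (hp1 : μ (Y ⁻¹' {1}) ≠ 0) (hp0 : μ (Y ⁻¹' {0}) ≠ 0)
    {A B : Set Ω} (hA : MeasurableSet A) (hB : MeasurableSet B)
    (h : (μ⟦A ∩ B | MeasurableSpace.comap Y inferInstance⟧) =ᵐ[μ]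
      fun ω => (μ⟦A | MeasurableSpace.comap Y inferInstance⟧) ω
        * (μ⟦B | MeasurableSpace.comap Y inferInstance⟧) ω)
    (c : ℝ) (hc : c = 0 ∨ c = 1) :
    (μ (A ∩ B ∩ Y ⁻¹' {c})).toReal * (μ (Y ⁻¹' {c})).toReal
      = (μ (A ∩ Y ⁻¹' {c})).toReal * (μ (B ∩ Y ⁻¹' {c})).toReal := by
  have hpc : μ (Y ⁻¹' {c}) ≠ 0 := by rcases hc with rfl | rfl <;> assumption
  have hpc' : (μ (Y ⁻¹' {c})).toReal ≠ 0 := ENNReal.toReal_ne_zero.mpr ⟨hpc, measure_ne_top μ _⟩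
  set pc := (μ (Y ⁻¹' {c})).toReal
  have hmc : MeasurableSet (Y ⁻¹' {c}) := hY (measurableSet_singleton c)
  have hval : ∀ (D : Set Ω), ∀ ω ∈ Y ⁻¹' {c},
      (fun ω => (μ (D ∩ Y ⁻¹' {1})).toReal / (μ (Y ⁻¹' {1})).toReal * Y ω
        + (μ (D ∩ Y ⁻¹' {0})).toReal / (μ (Y ⁻¹' {0})).toReal * (1 - Y ω)) ω
      = (μ (D ∩ Y ⁻¹' {c})).toReal / pc := by
    intro D ω hω
    simp only [Set.mem_preimage, Set.mem_singleton_iff] at hω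
    rcases hc with rfl | rfl <;> simp [hω, pc]
  have hprod : (fun ω => (μ⟦A | MeasurableSpace.comap Y inferInstance⟧) ω
      * (μ⟦B | MeasurableSpace.comap Y inferInstance⟧) ω) =ᵐ[μ]
      fun ω => ((μ (A ∩ Y ⁻¹' {1})).toReal / (μ (Y ⁻¹' {1})).toReal * Y ω
        + (μ (A ∩ Y ⁻¹' {0})).toReal / (μ (Y ⁻¹' {0})).toReal * (1 - Y ω))
        * ((μ (B ∩ Y ⁻¹' {1})).toReal / (μ (Y ⁻¹' {1})).toReal * Y ω
        + (μ (B ∩ Y ⁻¹' {0})).toReal / (μ (Y ⁻¹' {0})).toReal * (1 - Y ω)) :=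
    (aux_condexp_ind μ hY hYval hp1 hp0 hA).mul (aux_condexp_ind μ hY hYval hp1 hp0 hB)
  have key : ∫ ω in Y ⁻¹' {c}, (μ⟦A ∩ B | MeasurableSpace.comap Y inferInstance⟧) ω ∂μ
      = ∫ ω in Y ⁻¹' {c}, ((μ (A ∩ Y ⁻¹' {c})).toReal / pc * ((μ (B ∩ Y ⁻¹' {c})).toReal / pc)) ∂μ := by
    rw [integral_congr_ae (ae_restrict_of_ae (h.trans hprod))]
    refine setIntegral_congr_fun hmc (fun ω hω => ?_)
    exact congrArg₂ HMul.hMul (hval A ω hω) (hval B ω hω)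
  rw [setIntegral_condExp hY.comap_le ((integrable_const (1:ℝ)).indicator (hA.inter hB))
    ⟨{c}, measurableSet_singleton c, rfl⟩, setIntegral_indicator (hA.inter hB),
    setIntegral_const, setIntegral_const, measureReal_def, measureReal_def, smul_eq_mul, mul_one, smul_eq_mul,
    Set.inter_comm] at key
  rw [key]
  field_simp
  ring

lemma aux_biso_sum (μ : Measure Ω) [IsProbabilityMeasure μ] {X Y : Ω → ℝ}
    (hX : Measurable X) (hY : Measurable Y) (S : Finset ℝ) (hS : ∀ ω, X ω ∈ S)
    (hSsym : ∀ x ∈ S, -x ∈ S)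
    (hBISO : ∀ x : ℝ, μ (X ⁻¹' {x} ∩ Y ⁻¹' {1}) * μ (Y ⁻¹' {0})
      = μ (X ⁻¹' {-x} ∩ Y ⁻¹' {0}) * μ (Y ⁻¹' {1}))
    (φ : ℝ → ℝ) :
    (∫ ω in Y ⁻¹' {1}, φ (X ω) ∂μ) * (μ (Y ⁻¹' {0})).toReal
      = (∫ ω in Y ⁻¹' {0}, φ (-X ω) ∂μ) * (μ (Y ⁻¹' {1})).toReal := by
  have h1 := aux_sum_integral μ hX S hS (hY (measurableSet_singleton 1)) φ
  have h0 : ∫ ω in Y ⁻¹' {0}, φ (-X ω) ∂μ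
      = ∑ x ∈ S, φ (-x) * (μ (X ⁻¹' {x} ∩ Y ⁻¹' {0})).toReal :=
    aux_sum_integral μ hX S hS (hY (measurableSet_singleton 0)) (fun x => φ (-x))
  have hterm : ∀ x : ℝ, (μ (X ⁻¹' {x} ∩ Y ⁻¹' {1})).toReal * (μ (Y ⁻¹' {0})).toReal
      = (μ (X ⁻¹' {-x} ∩ Y ⁻¹' {0})).toReal * (μ (Y ⁻¹' {1})).toReal := fun x => by
    rw [← ENNReal.toReal_mul, ← ENNReal.toReal_mul, hBISO x]
  rw [h1, h0, Finset.sum_mul, Finset.sum_mul]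
  have hcong : ∀ x ∈ S, φ x * (μ (X ⁻¹' {x} ∩ Y ⁻¹' {1})).toReal * (μ (Y ⁻¹' {0})).toReal
      = φ x * (μ (X ⁻¹' {-x} ∩ Y ⁻¹' {0})).toReal * (μ (Y ⁻¹' {1})).toReal := fun x _ => by
    rw [mul_assoc, hterm x, ← mul_assoc]
  rw [Finset.sum_congr rfl hcong]
  refine Finset.sum_nbij' (i := fun x => -x) (j := fun x => -x)
    (fun x hx => hSsym x hx) (fun x hx => hSsym x hx)
    (fun x _ => neg_neg x) (fun x _ => neg_neg x) (fun x _ => by rw [neg_neg])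

end AuxHelpers

/-- For a BISO channel `P_{X|Y}` with binary `Y` and any `Z` with `X–Y–Z` Markov:
`mmse(Y|Z) = (mmse(X|Z) - var(X|Y=1)) / (4 E[X|Y=1]²)`. -/
theorem stmt10 {Ω : Type*} [MeasurableSpace Ω] [StandardBorelSpace Ω] [Nonempty Ω]
    (μ : Measure Ω) [IsProbabilityMeasure μ]
    (X Y : Ω → ℝ) (k : ℕ) (hk : 0 < k)
    (hX : Measurable X) (hY : Measurable Y)
    (hXval : ∀ ω, ∃ i : Fin k, X ω = (i : ℝ) + 1 ∨ X ω = -((i : ℝ) + 1))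
    (hYval : ∀ ω, Y ω = 0 ∨ Y ω = 1)
    (hp1 : μ (Y ⁻¹' {1}) ≠ 0) (hp0 : μ (Y ⁻¹' {0}) ≠ 0)
    (hBISO : ∀ x : ℝ, μ (X ⁻¹' {x} ∩ Y ⁻¹' {1}) * μ (Y ⁻¹' {0})
      = μ (X ⁻¹' {-x} ∩ Y ⁻¹' {0}) * μ (Y ⁻¹' {1}))
    {β : Type*} [MeasurableSpace β] (Z : Ω → β) (hZ : Measurable Z)
    (hmarkov : CondIndepFun (MeasurableSpace.comap Y inferInstance) hY.comap_le X Z μ)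
    (hEX1 : (∫ ω, X ω ∂μ[|Y ⁻¹' {1}]) ≠ 0) :
    mmse μ Y Z
      = (mmse μ X Z - variance X μ[|Y ⁻¹' {1}]) / (4 * (∫ ω, X ω ∂μ[|Y ⁻¹' {1}]) ^ 2) := by
  classical
  have mY1 : MeasurableSet (Y ⁻¹' {(1:ℝ)}) := hY (measurableSet_singleton 1)
  have mY0 : MeasurableSet (Y ⁻¹' {(0:ℝ)}) := hY (measurableSet_singleton 0)
  set Y1 := Y ⁻¹' {(1:ℝ)} with hY1def
  set Y0 := Y ⁻¹' {(0:ℝ)} with hY0def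
  set ν := μ[|Y1] with hνdef
  haveI hνP : IsProbabilityMeasure ν := cond_isProbabilityMeasure hp1
  set m := ∫ ω, X ω ∂ν with hmdef
  -- basic probabilities
  set p1 := (μ Y1).toReal with hp1def
  set p0 := (μ Y0).toReal with hp0def
  have hp1' : p1 ≠ 0 := ENNReal.toReal_ne_zero.mpr ⟨hp1, measure_ne_top μ _⟩
  have hp0' : p0 ≠ 0 := ENNReal.toReal_ne_zero.mpr ⟨hp0, measure_ne_top μ _⟩
  have hdisj : Disjoint Y1 Y0 := by
    rw [Set.disjoint_left]
    intro ω h1 h0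
    simp only [hY1def, hY0def, Set.mem_preimage, Set.mem_singleton_iff] at h1 h0
    norm_num [h1] at h0
  have hunion : Y1 ∪ Y0 = Set.univ := by
    ext ω
    simp only [hY1def, hY0def, Set.mem_union, Set.mem_preimage, Set.mem_singleton_iff,
      Set.mem_univ, iff_true]
    rcases hYval ω with h | h <;> tauto
  have hpsum : p1 + p0 = 1 := by
    rw [hp1def, hp0def, ← ENNReal.toReal_add (measure_ne_top μ _) (measure_ne_top μ _),
      ← measure_union hdisj mY0, hunion, measure_univ, ENNReal.toReal_one]
  -- the value set S
  set S : Finset ℝ := Finset.image (fun i : Fin k => ((i:ℝ)+1)) Finset.univ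
    ∪ Finset.image (fun i : Fin k => -((i:ℝ)+1)) Finset.univ with hSdef
  have hS : ∀ ω, X ω ∈ S := by
    intro ω
    obtain ⟨i, h | h⟩ := hXval ω
    · exact Finset.mem_union_left _ (Finset.mem_image.mpr ⟨i, Finset.mem_univ i, h.symm⟩)
    · exact Finset.mem_union_right _ (Finset.mem_image.mpr ⟨i, Finset.mem_univ i, h.symm⟩)
  have hSsym : ∀ x ∈ S, -x ∈ S := by
    intro x hx
    rcases Finset.mem_union.mp hx with h | h
    · obtain ⟨i, -, rfl⟩ := Finset.mem_image.mp h
      exact Finset.mem_union_right _ (Finset.mem_image.mpr ⟨i, Finset.mem_univ i, rfl⟩)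
    · obtain ⟨i, -, rfl⟩ := Finset.mem_image.mp h
      exact Finset.mem_union_left _ (Finset.mem_image.mpr ⟨i, Finset.mem_univ i, (neg_neg (((i:ℕ):ℝ)+1)).symm⟩)
  -- boundedness and integrability
  have hXbd : ∀ ω, |X ω| ≤ (k:ℝ) := by
    intro ω
    have hi : ∀ i : Fin k, ((i:ℕ):ℝ) + 1 ≤ (k:ℝ) := fun i => by
      exact_mod_cast Nat.succ_le_of_lt i.isLt
    obtain ⟨i, h | h⟩ := hXval ω
    · rw [h, abs_of_pos (by positivity)]; exact hi i
    · rw [h, abs_neg, abs_of_pos (by positivity)]; exact hi i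
  have hXint : Integrable X μ :=
    aux_int μ hX.aestronglyMeasurable k (Filter.Eventually.of_forall hXbd)
  have hYbd : ∀ ω, |Y ω| ≤ 1 := by
    intro ω; rcases hYval ω with h | h <;> simp [h]
  have hYint : Integrable Y μ :=
    aux_int μ hY.aestronglyMeasurable 1 (Filter.Eventually.of_forall hYbd)
  have hX2int : Integrable (fun ω => X ω ^ 2) μ := by
    refine aux_int μ ((hX.pow_const 2).aestronglyMeasurable) ((k:ℝ)^2)
      (Filter.Eventually.of_forall fun ω => ?_)
    rw [abs_pow]
    exact pow_le_pow_left₀ (abs_nonneg _) (hXbd ω) 2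
  -- conditional measure integrals
  have hcondint : ∀ f : Ω → ℝ, ∫ ω, f ω ∂ν = p1⁻¹ * ∫ ω in Y1, f ω ∂μ := by
    intro f
    rw [hνdef, ProbabilityTheory.cond, integral_smul_measure, ENNReal.toReal_inv, smul_eq_mul,
      hp1def]
  have hIX1 : ∫ ω in Y1, X ω ∂μ = m * p1 := by
    rw [hmdef, hcondint X]
    field_simp
  -- BISO consequences
  have hIX0 : ∫ ω in Y0, X ω ∂μ = -(m * p0) := by
    have h := aux_biso_sum μ hX hY S hS hSsym hBISO (fun x => x)
    simp only [hY1def.symm, hY0def.symm, hp1def.symm, hp0def.symm] at h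
    have h2 : ∫ ω in Y0, -X ω ∂μ = -∫ ω in Y0, X ω ∂μ := integral_neg _
    rw [hIX1, h2] at h
    have h3 : (∫ ω in Y0, X ω ∂μ) * p1 = (-(m * p0)) * p1 := by linear_combination h
    exact mul_right_cancel₀ hp1' h3
  have hIX2 : ∫ ω in Y0, X ω ^ 2 ∂μ = (∫ ω in Y1, X ω ^ 2 ∂μ) * p0 / p1 := by
    have h := aux_biso_sum μ hX hY S hS hSsym hBISO (fun x => x ^ 2)
    simp only [hY1def.symm, hY0def.symm, hp1def.symm, hp0def.symm] at h
    have hcong : ∫ ω in Y0, (-X ω) ^ 2 ∂μ = ∫ ω in Y0, X ω ^ 2 ∂μ :=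
      integral_congr_ae (Filter.Eventually.of_forall fun ω => by ring)
    rw [hcong] at h
    rw [eq_div_iff hp1']
    linarith [h]
  -- the Markov factorization
  have hmark := (condIndepFun_iff_condExp_inter_preimage_eq_mul hX hZ).mp hmarkov
  have hFc : ∀ (s : Set ℝ) (t : Set β), MeasurableSet s → MeasurableSet t →
      ∀ c : ℝ, c = 0 ∨ c = 1 →
      (μ (X ⁻¹' s ∩ Z ⁻¹' t ∩ Y ⁻¹' {c})).toReal * (μ (Y ⁻¹' {c})).toReal
        = (μ (X ⁻¹' s ∩ Y ⁻¹' {c})).toReal * (μ (Z ⁻¹' t ∩ Y ⁻¹' {c})).toReal :=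
    fun s t hs ht c hc =>
      aux_factor μ hY hYval hp1 hp0 (hX hs) (hZ ht) (hmark s t hs ht) c hc
  -- integrals over Z-measurable sets
  have hqX : ∀ t : Set β, MeasurableSet t →
      ∫ ω in Z ⁻¹' t, X ω ∂μ
        = m * (μ (Z ⁻¹' t ∩ Y1)).toReal - m * (μ (Z ⁻¹' t ∩ Y0)).toReal := by
    intro t ht
    have hF1 : ∀ x : ℝ, (μ (X ⁻¹' {x} ∩ (Z ⁻¹' t ∩ Y1))).toReal * p1
        = (μ (X ⁻¹' {x} ∩ Y1)).toReal * (μ (Z ⁻¹' t ∩ Y1)).toReal := fun x => by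
      have h := hFc {x} t (measurableSet_singleton x) ht 1 (Or.inr rfl)
      rw [Set.inter_assoc] at h
      exact h
    have hF0 : ∀ x : ℝ, (μ (X ⁻¹' {x} ∩ (Z ⁻¹' t ∩ Y0))).toReal * p0
        = (μ (X ⁻¹' {x} ∩ Y0)).toReal * (μ (Z ⁻¹' t ∩ Y0)).toReal := fun x => by
      have h := hFc {x} t (measurableSet_singleton x) ht 0 (Or.inl rfl)
      rw [Set.inter_assoc] at h
      exact h
    have hsplit := aux_split μ hY hYval hXint.integrableOn (hZ ht)
    simp only [hY1def.symm, hY0def.symm] at hsplit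
    rw [hsplit]
    have e1 : ∫ ω in Z ⁻¹' t ∩ Y1, X ω ∂μ = m * (μ (Z ⁻¹' t ∩ Y1)).toReal := by
      have hs := aux_sum_integral μ hX S hS ((hZ ht).inter mY1) (fun x => x)
      have hs1 := aux_sum_integral μ hX S hS mY1 (fun x => x)
      rw [hs]
      have hper : ∀ x ∈ S, x * (μ (X ⁻¹' {x} ∩ (Z ⁻¹' t ∩ Y1))).toReal
          = x * (μ (X ⁻¹' {x} ∩ Y1)).toReal * ((μ (Z ⁻¹' t ∩ Y1)).toReal / p1) := fun x _ => by
        rw [(eq_div_iff hp1').mpr (hF1 x)]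
        ring
      rw [Finset.sum_congr rfl hper, ← Finset.sum_mul, ← hs1, hIX1]
      field_simp
    have e0 : ∫ ω in Z ⁻¹' t ∩ Y0, X ω ∂μ = -(m * (μ (Z ⁻¹' t ∩ Y0)).toReal) := by
      have hs := aux_sum_integral μ hX S hS ((hZ ht).inter mY0) (fun x => x)
      have hs0 := aux_sum_integral μ hX S hS mY0 (fun x => x)
      rw [hs]
      have hper : ∀ x ∈ S, x * (μ (X ⁻¹' {x} ∩ (Z ⁻¹' t ∩ Y0))).toReal
          = x * (μ (X ⁻¹' {x} ∩ Y0)).toReal * ((μ (Z ⁻¹' t ∩ Y0)).toReal / p0) := fun x _ => by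
        rw [(eq_div_iff hp0').mpr (hF0 x)]
        ring
      rw [Finset.sum_congr rfl hper, ← Finset.sum_mul, ← hs0, hIX0]
      field_simp
    rw [e1, e0]
    ring
  have hqY : ∀ t : Set β, MeasurableSet t →
      ∫ ω in Z ⁻¹' t, Y ω ∂μ = (μ (Z ⁻¹' t ∩ Y1)).toReal := by
    intro t ht
    have h := aux_split μ hY hYval hYint.integrableOn (hZ ht)
    simp only [hY1def.symm, hY0def.symm] at h
    rw [h]
    have e1 : ∫ ω in Z ⁻¹' t ∩ Y1, Y ω ∂μ = (μ (Z ⁻¹' t ∩ Y1)).toReal := by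
      rw [setIntegral_congr_fun ((hZ ht).inter mY1) (g := fun _ => (1:ℝ))
        (fun ω hω => hω.2), setIntegral_const, smul_eq_mul, mul_one, measureReal_def]
    have e0 : ∫ ω in Z ⁻¹' t ∩ Y0, Y ω ∂μ = 0 := by
      rw [setIntegral_congr_fun ((hZ ht).inter mY0) (g := fun _ => (0:ℝ))
        (fun ω hω => hω.2), setIntegral_const, smul_zero]
    rw [e1, e0, add_zero]
  have hqμ : ∀ t : Set β, MeasurableSet t →
      (μ (Z ⁻¹' t)).toReal = (μ (Z ⁻¹' t ∩ Y1)).toReal + (μ (Z ⁻¹' t ∩ Y0)).toReal := by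
    intro t ht
    have hset : Z ⁻¹' t = (Z ⁻¹' t ∩ Y1) ∪ (Z ⁻¹' t ∩ Y0) := by
      rw [← Set.inter_union_distrib_left, hunion, Set.inter_univ]
    rw [← ENNReal.toReal_add (measure_ne_top μ _) (measure_ne_top μ _),
      ← measure_union (hdisj.mono Set.inter_subset_right Set.inter_subset_right)
        ((hZ ht).inter mY0), ← hset]
  -- W and its properties
  set W : Ω → ℝ := fun ω => X ω - m * (2 * Y ω - 1) with hWdef
  have hWbd : ∀ ω, |W ω| ≤ (k:ℝ) + |m| := by
    intro ω
    have h1 : |W ω| ≤ |X ω| + |m * (2 * Y ω - 1)| := by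
      simp only [hWdef, sub_eq_add_neg]
      exact (abs_add_le _ _).trans (by rw [abs_neg])
    have h2 : |m * (2 * Y ω - 1)| = |m| := by
      rcases hYval ω with h | h <;> rw [h, abs_mul] <;> norm_num
    have := hXbd ω
    linarith
  have hWmeas : Measurable W := by
    exact hX.sub (measurable_const.mul ((measurable_const.mul hY).sub measurable_const))
  have hWint : Integrable W μ :=
    aux_int μ hWmeas.aestronglyMeasurable _ (Filter.Eventually.of_forall hWbd)
  -- conditional expectation given Z
  set G := μ[Y | (MeasurableSpace.comap Z inferInstance)] with hGdef
  have hGint : Integrable G μ := integrable_condExp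
  have hGsm : StronglyMeasurable[(MeasurableSpace.comap Z inferInstance)] G := stronglyMeasurable_condExp
  have hGaesm : AEStronglyMeasurable G μ :=
    (hGsm.mono hZ.comap_le).aestronglyMeasurable
  have hGbd : ∀ᵐ ω ∂μ, |G ω| ≤ 1 := by
    have h0 : (0 : Ω → ℝ) ≤ᵐ[μ] G :=
      condExp_nonneg (Filter.Eventually.of_forall fun ω => by
        rcases hYval ω with h | h <;> simp [h])
    have h1 : G ≤ᵐ[μ] fun _ => (1:ℝ) := by
      have h := condExp_mono (m := MeasurableSpace.comap Z inferInstance) hYint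
        (integrable_const (1:ℝ))
        (Filter.Eventually.of_forall fun ω => by rcases hYval ω with h | h <;> simp [h])
      rwa [condExp_const hZ.comap_le] at h
    filter_upwards [h0, h1] with ω ha hb
    rw [abs_le]
    constructor
    · simpa using ha.trans hb |>.trans (le_refl _) |> fun _ => by
        have : (0:ℝ) ≤ G ω := ha
        linarith
    · exact hb
  have hgint : Integrable (fun ω => m * (2 * G ω - 1)) μ :=
    ((hGint.const_mul 2).sub (integrable_const 1)).const_mul m
  have hXcond : (fun ω => m * (2 * G ω - 1)) =ᵐ[μ] μ[X | (MeasurableSpace.comap Z inferInstance)] := by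
    refine ae_eq_condExp_of_forall_setIntegral_eq hZ.comap_le hXint
      (fun s _ _ => hgint.integrableOn) ?_ ?_
    · rintro s ⟨t, ht, rfl⟩ -
      have hGs : ∫ ω in Z ⁻¹' t, G ω ∂μ = (μ (Z ⁻¹' t ∩ Y1)).toReal := by
        rw [hGdef, setIntegral_condExp hZ.comap_le hYint ⟨t, ht, rfl⟩]
        exact hqY t ht
      have hint : ∫ ω in Z ⁻¹' t, m * (2 * G ω - 1) ∂μ
          = m * (2 * (∫ ω in Z ⁻¹' t, G ω ∂μ) - (μ (Z ⁻¹' t)).toReal) := by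
        rw [integral_const_mul,
          integral_sub ((hGint.integrableOn).const_mul 2) (integrable_const 1),
          integral_const_mul, setIntegral_const, smul_eq_mul, mul_one, measureReal_def]
      rw [hint, hGs, hqμ t ht, hqX t ht]
      ring
    · exact StronglyMeasurable.aestronglyMeasurable
        (stronglyMeasurable_const.mul
          ((stronglyMeasurable_const.mul hGsm).sub stronglyMeasurable_const))
  have hmwint : Integrable (fun ω => m * (2 * Y ω - 1)) μ :=
    ((hYint.const_mul 2).sub (integrable_const 1)).const_mul m
  have hWcond : μ[W | (MeasurableSpace.comap Z inferInstance)] =ᵐ[μ] 0 := by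
    have hsub : μ[W | (MeasurableSpace.comap Z inferInstance)]
        =ᵐ[μ] μ[X | (MeasurableSpace.comap Z inferInstance)]
          - μ[(fun ω => m * (2 * Y ω - 1)) | (MeasurableSpace.comap Z inferInstance)] :=
      condExp_sub hXint hmwint _
    have c2 : μ[(fun ω => (2:ℝ) * Y ω) | (MeasurableSpace.comap Z inferInstance)]
        =ᵐ[μ] fun ω => 2 * G ω := by
      have h := condExp_smul (μ := μ) (m := MeasurableSpace.comap Z inferInstance) (2:ℝ) Y
      simpa [hGdef, Pi.smul_def] using h
    have c3 : μ[(fun ω => (2:ℝ) * Y ω - 1) | (MeasurableSpace.comap Z inferInstance)]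
        =ᵐ[μ] (μ[(fun ω => (2:ℝ) * Y ω) | (MeasurableSpace.comap Z inferInstance)])
          - (μ[(fun _ => (1:ℝ)) | (MeasurableSpace.comap Z inferInstance)]) :=
      condExp_sub (hYint.const_mul 2) (integrable_const 1) _
    have c4 : μ[(fun ω => m * (2 * Y ω - 1)) | (MeasurableSpace.comap Z inferInstance)]
        =ᵐ[μ] fun ω => m * (2 * G ω - 1) := by
      have h := condExp_smul (μ := μ) (m := MeasurableSpace.comap Z inferInstance) m
        (fun ω => (2:ℝ) * Y ω - 1)
      refine h.trans ?_
      have := c3.trans (c2.sub (Filter.EventuallyEq.refl _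
        (μ[(fun _ => (1:ℝ)) | (MeasurableSpace.comap Z inferInstance)])))
      rw [condExp_const hZ.comap_le] at this
      filter_upwards [this] with ω hω
      simp only [Pi.smul_apply, smul_eq_mul]
      rw [show ((μ[(fun ω => (2:ℝ) * Y ω - 1) | (MeasurableSpace.comap Z inferInstance)]) ω)
        = (2 * G ω - 1) from by
          have := hω; simpa [Pi.sub_apply] using this]
    refine hsub.trans ?_
    filter_upwards [hXcond, c4] with ω h1 h2
    simp only [Pi.sub_apply, Pi.zero_apply, ← h1, h2]
    ring
  have hIWY1 : ∫ ω in Y1, W ω ∂μ = 0 := by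
    have hcong : ∫ ω in Y1, W ω ∂μ = ∫ ω in Y1, (X ω - m) ∂μ :=
      setIntegral_congr_fun mY1 (fun ω hω => by
        have h1 : Y ω = 1 := hω
        simp only [hWdef, h1]; ring)
    rw [hcong, integral_sub hXint.integrableOn (integrable_const m), hIX1,
      setIntegral_const, measureReal_def, smul_eq_mul, ← hp1def]
    ring
  have hWYint : Integrable (fun ω => W ω * Y ω) μ := by
    refine aux_int μ ((hWmeas.mul hY).aestronglyMeasurable) ((k:ℝ) + |m|)
      (Filter.Eventually.of_forall fun ω => ?_)
    calc |W ω * Y ω| = |W ω| * |Y ω| := abs_mul _ _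
      _ ≤ ((k:ℝ) + |m|) * 1 := mul_le_mul (hWbd ω) (hYbd ω) (abs_nonneg _) (by positivity)
      _ = (k:ℝ) + |m| := mul_one _
  have hWY : ∫ ω, W ω * Y ω ∂μ = 0 := by
    have h := aux_split μ hY hYval hWYint.integrableOn MeasurableSet.univ
    simp only [hY1def.symm, hY0def.symm, Set.univ_inter] at h
    have e1 : ∫ ω in Y1, W ω * Y ω ∂μ = ∫ ω in Y1, W ω ∂μ :=
      setIntegral_congr_fun mY1 (fun ω hω => by
        have h1 : Y ω = 1 := hω
        rw [h1, mul_one])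
    have e0 : ∫ ω in Y0, W ω * Y ω ∂μ = 0 := by
      rw [setIntegral_congr_fun mY0 (g := fun _ => (0:ℝ)) (fun ω hω => by
        have h0 : Y ω = 0 := hω
        rw [h0, mul_zero]), setIntegral_const, smul_zero]
    calc ∫ ω, W ω * Y ω ∂μ = ∫ ω in Set.univ, W ω * Y ω ∂μ := by rw [Measure.restrict_univ]
      _ = 0 := by rw [h, e1, e0, hIWY1, add_zero]
  have hWG : ∫ ω, W ω * G ω ∂μ = 0 := by
    have hGWint : Integrable (fun ω => G ω * W ω) μ := by
      refine aux_int μ (hGaesm.mul hWmeas.aestronglyMeasurable) ((k:ℝ) + |m|) ?_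
      filter_upwards [hGbd] with ω hg
      calc |G ω * W ω| = |G ω| * |W ω| := abs_mul _ _
        _ ≤ 1 * ((k:ℝ) + |m|) := mul_le_mul hg (hWbd ω) (abs_nonneg _) (by positivity)
        _ = (k:ℝ) + |m| := one_mul _
    have hpull := condExp_mul_of_stronglyMeasurable_left (μ := μ) hGsm hGWint hWint
    have hzero : μ[(fun ω => G ω * W ω) | (MeasurableSpace.comap Z inferInstance)]
        =ᵐ[μ] (0 : Ω → ℝ) := by
      refine hpull.trans ?_
      filter_upwards [hWcond] with ω hω
      simp only [Pi.mul_apply, Pi.zero_apply]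
      rw [show (μ[W | (MeasurableSpace.comap Z inferInstance)]) ω = 0 from hω, mul_zero]
    calc ∫ ω, W ω * G ω ∂μ = ∫ ω, G ω * W ω ∂μ :=
          integral_congr_ae (Filter.Eventually.of_forall fun ω => mul_comm _ _)
      _ = ∫ ω, (μ[(fun ω => G ω * W ω) | (MeasurableSpace.comap Z inferInstance)]) ω ∂μ :=
          (integral_condExp hZ.comap_le (f := fun ω => G ω * W ω) (μ := μ)).symm
      _ = ∫ ω, (0:ℝ) ∂μ := integral_congr_ae hzero
      _ = 0 := integral_zero _ _
  have hW2int : Integrable (fun ω => W ω ^ 2) μ := by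
    refine aux_int μ ((hWmeas.pow_const 2).aestronglyMeasurable) (((k:ℝ) + |m|) ^ 2)
      (Filter.Eventually.of_forall fun ω => ?_)
    rw [abs_pow]
    exact pow_le_pow_left₀ (abs_nonneg _) (hWbd ω) 2
  have hW2 : ∫ ω, W ω ^ 2 ∂μ = variance X ν := by
    have e1 : ∫ ω in Y1, W ω ^ 2 ∂μ
        = (∫ ω in Y1, X ω ^ 2 ∂μ) - 2 * m * (m * p1) + p1 * m ^ 2 := by
      rw [setIntegral_congr_fun mY1 (g := fun ω => X ω ^ 2 - 2 * m * X ω + m ^ 2)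
        (fun ω hω => by
          have h1 : Y ω = 1 := hω
          simp only [hWdef, h1]; ring)]
      have i1 : Integrable (fun ω => X ω ^ 2 - 2 * m * X ω) (μ.restrict Y1) :=
        hX2int.integrableOn.sub ((hXint.integrableOn).const_mul (2 * m))
      rw [integral_add i1 (integrable_const _),
        integral_sub hX2int.integrableOn ((hXint.integrableOn).const_mul (2 * m)),
        integral_const_mul, setIntegral_const, measureReal_def, smul_eq_mul, hIX1, ← hp1def]
    have e0 : ∫ ω in Y0, W ω ^ 2 ∂μ
        = (∫ ω in Y0, X ω ^ 2 ∂μ) + 2 * m * (-(m * p0)) + p0 * m ^ 2 := by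
      rw [setIntegral_congr_fun mY0 (g := fun ω => X ω ^ 2 + 2 * m * X ω + m ^ 2)
        (fun ω hω => by
          have h0 : Y ω = 0 := hω
          simp only [hWdef, h0]; ring)]
      have i0 : Integrable (fun ω => X ω ^ 2 + 2 * m * X ω) (μ.restrict Y0) :=
        hX2int.integrableOn.add ((hXint.integrableOn).const_mul (2 * m))
      rw [integral_add i0 (integrable_const _),
        integral_add hX2int.integrableOn ((hXint.integrableOn).const_mul (2 * m)),
        integral_const_mul, setIntegral_const, measureReal_def, smul_eq_mul, hIX0, ← hp0def]
    have hsplit := aux_split μ hY hYval hW2int.integrableOn MeasurableSet.univ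
    simp only [hY1def.symm, hY0def.symm, Set.univ_inter] at hsplit
    have hvar : variance X ν = p1⁻¹ * (∫ ω in Y1, X ω ^ 2 ∂μ) - m ^ 2 := by
      rw [variance_eq_sub (aux_memLp ν hX.aestronglyMeasurable k
        (Filter.Eventually.of_forall hXbd))]
      have h2 : ∫ ω, (X ^ 2) ω ∂ν = p1⁻¹ * ∫ ω in Y1, X ω ^ 2 ∂μ := by
        have := hcondint (fun ω => X ω ^ 2)
        simpa using this
      rw [h2, ← hmdef]
    calc ∫ ω, W ω ^ 2 ∂μ = ∫ ω in Set.univ, W ω ^ 2 ∂μ := by rw [Measure.restrict_univ]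
      _ = _ := hsplit
      _ = variance X ν := by
          rw [e1, e0, hIX2, hvar]
          field_simp
          linear_combination ((∫ ω in Y1, X ω ^ 2 ∂μ) - m ^ 2 * p1) * hpsum
  -- final assembly
  have hmmseY : mmse μ Y Z = ∫ ω, (Y ω - G ω) ^ 2 ∂μ := rfl
  have hWYGint : Integrable (fun ω => W ω * (Y ω - G ω)) μ := by
    refine aux_int μ (hWmeas.aestronglyMeasurable.mul
      (hY.aestronglyMeasurable.sub hGaesm)) (((k:ℝ) + |m|) * 2) ?_
    filter_upwards [hGbd] with ω hg
    calc |W ω * (Y ω - G ω)| = |W ω| * |Y ω - G ω| := abs_mul _ _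
      _ ≤ ((k:ℝ) + |m|) * 2 := by
          refine mul_le_mul (hWbd ω) ?_ (abs_nonneg _) (by positivity)
          calc |Y ω - G ω| ≤ |Y ω| + |G ω| := abs_sub _ _
            _ ≤ 1 + 1 := add_le_add (hYbd ω) hg
            _ = 2 := by norm_num
  have hGmeas : Measurable G := (hGsm.mono hZ.comap_le).measurable
  have hYG2int : Integrable (fun ω => (Y ω - G ω) ^ 2) μ := by
    refine aux_int μ (((hY.sub hGmeas).pow_const 2).aestronglyMeasurable) 4 ?_
    filter_upwards [hGbd] with ω hg
    rw [abs_pow]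
    have hle : |Y ω - G ω| ≤ 2 := (abs_sub _ _).trans (by linarith [hYbd ω])
    calc |Y ω - G ω| ^ 2 ≤ 2 ^ 2 := pow_le_pow_left₀ (abs_nonneg _) hle 2
      _ = 4 := by norm_num
  have hWGint2 : Integrable (fun ω => W ω * G ω) μ := by
    refine aux_int μ (hWmeas.aestronglyMeasurable.mul hGaesm) ((k:ℝ) + |m|) ?_
    filter_upwards [hGbd] with ω hg
    calc |W ω * G ω| = |W ω| * |G ω| := abs_mul _ _
      _ ≤ ((k:ℝ) + |m|) * 1 := mul_le_mul (hWbd ω) hg (abs_nonneg _) (by positivity)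
      _ = (k:ℝ) + |m| := mul_one _
  have hcross : ∫ ω, W ω * (Y ω - G ω) ∂μ = 0 := by
    have : ∫ ω, W ω * (Y ω - G ω) ∂μ = ∫ ω, (W ω * Y ω - W ω * G ω) ∂μ :=
      integral_congr_ae (Filter.Eventually.of_forall fun ω => by ring)
    rw [this, integral_sub hWYint hWGint2, hWY, hWG, sub_zero]
  have hmmseX : mmse μ X Z = variance X ν + 4 * m ^ 2 * mmse μ Y Z := by
    have h1 : mmse μ X Z = ∫ ω, (X ω - m * (2 * G ω - 1)) ^ 2 ∂μ := by
      refine integral_congr_ae ?_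
      filter_upwards [hXcond] with ω h
      rw [← h]
    have hptw : (fun ω => (X ω - m * (2 * G ω - 1)) ^ 2)
        = fun ω => W ω ^ 2 + (4 * m) * (W ω * (Y ω - G ω)) + (4 * m ^ 2) * (Y ω - G ω) ^ 2 := by
      funext ω
      simp only [hWdef]
      ring
    rw [h1, hptw]
    have i2 : Integrable (fun ω => W ω ^ 2 + 4 * m * (W ω * (Y ω - G ω))) μ :=
      hW2int.add (hWYGint.const_mul (4 * m))
    rw [integral_add i2 ((hYG2int).const_mul (4 * m ^ 2)),
      integral_add hW2int (hWYGint.const_mul (4 * m)),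
      integral_const_mul, integral_const_mul, hcross, hW2, hmmseY]
    ring
  rw [hmmseX]
  have hm4 : 4 * m ^ 2 ≠ 0 := by
    have : m ≠ 0 := hEX1
    positivity
  field_simp
  ring
end

section
/- Let Y ~ Bernoulli(p) with p ≥ 1/2 and Z a random variable jointly distributed with Y. Let P_e = min over decoders Ŷ of Pr(Ŷ(Z) ≠ Y) be the Bayes error probability. Then (1/2) P_e ≤ mmse(Y|Z) ≤ P_e. -/
open MeasureTheory ProbabilityTheory

section AuxStmt13

variable {Ω : Type*} [mΩ : MeasurableSpace Ω] {μ : Measure Ω} [IsProbabilityMeasure μ]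
  {m : MeasurableSpace Ω}

/-- Pull-out property at the level of integrals: for an `m`-strongly measurable a.e. bounded
`φ`, `∫ φ Y = ∫ φ E[Y|m]`. -/
lemma aux13_int_mul (hm : m ≤ mΩ) {Y φ : Ω → ℝ} {c : ℝ}
    (hYint : Integrable Y μ) (hφ : StronglyMeasurable[m] φ)
    (hφb : ∀ᵐ ω ∂μ, ‖φ ω‖ ≤ c) :
    ∫ ω, φ ω * Y ω ∂μ = ∫ ω, φ ω * (μ[Y|m]) ω ∂μ := by
  have h1 : Integrable (φ * Y) μ :=
    hYint.bdd_mul ((hφ.mono hm).aestronglyMeasurable) hφb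
  have h2 := condExp_mul_of_stronglyMeasurable_left hφ h1 hYint
  calc ∫ ω, φ ω * Y ω ∂μ = ∫ ω, (μ[φ * Y|m]) ω ∂μ := (integral_condExp hm).symm
    _ = ∫ ω, φ ω * (μ[Y|m]) ω ∂μ := integral_congr_ae h2

end AuxStmt13


theorem stmt13_core {Ω : Type*} {m : MeasurableSpace Ω} [mΩ : MeasurableSpace Ω]
    (μ : Measure Ω) [IsProbabilityMeasure μ]
    {β : Type*} [mβ : MeasurableSpace β] (Y : Ω → ℝ) (Z : Ω → β)
    (hY : Measurable Y) (hZ : Measurable Z)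
    (hBer : ∀ ω, Y ω = 0 ∨ Y ω = 1)
    (hm : m ≤ mΩ)
    (hmz : m = MeasurableSpace.comap Z inferInstance) :
    (1 / 2) * sInf {r : ℝ | ∃ g : β → ℝ, Measurable g ∧ r = (μ {ω | g (Z ω) ≠ Y ω}).toReal}
        ≤ mmse μ Y Z ∧
      mmse μ Y Z
        ≤ sInf {r : ℝ | ∃ g : β → ℝ, Measurable g ∧ r = (μ {ω | g (Z ω) ≠ Y ω}).toReal} := by
  classical
  set η : Ω → ℝ := μ[Y|m] with hη_def
  have hY2 : ∀ ω, Y ω * Y ω = Y ω := by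
    intro ω; rcases hBer ω with h | h <;> simp [h]
  have hYsm : AEStronglyMeasurable Y μ := hY.aestronglyMeasurable
  have hYint : Integrable Y μ :=
    (integrable_const (1 : ℝ)).mono' hYsm
      (ae_of_all _ fun ω => by rcases hBer ω with h | h <;> simp [h])
  have hηint : Integrable η μ := integrable_condExp
  have hηsm : StronglyMeasurable[m] η := stronglyMeasurable_condExp
  have hηaesm : AEStronglyMeasurable η μ := (hηsm.mono hm).aestronglyMeasurable
  have hη01 : ∀ᵐ ω ∂μ, 0 ≤ η ω ∧ η ω ≤ 1 := by
    have h0 : 0 ≤ᵐ[μ] η :=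
      condExp_nonneg (ae_of_all _ fun ω => by rcases hBer ω with h | h <;> simp [h])
    have h1 : η ≤ᵐ[μ] μ[(fun _ => (1 : ℝ))|m] :=
      condExp_mono hYint (integrable_const (1 : ℝ))
        (ae_of_all _ fun ω => by rcases hBer ω with h | h <;> simp [h])
    have hc : μ[(fun _ => (1 : ℝ))|m] = fun _ => (1 : ℝ) := condExp_const hm 1
    filter_upwards [h0, h1] with ω hω0 hω1
    exact ⟨hω0, by simpa [hc] using hω1⟩
  have hηb : ∀ᵐ ω ∂μ, ‖η ω‖ ≤ 1 := by
    filter_upwards [hη01] with ω hω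
    rw [Real.norm_eq_abs, abs_le]; constructor <;> linarith [hω.1, hω.2]
  have I_ηY : Integrable (fun ω => η ω * Y ω) μ := hYint.bdd_mul hηaesm hηb
  have I_ηη : Integrable (fun ω => η ω * η ω) μ := hηint.bdd_mul hηaesm hηb
  have hηY : ∫ ω, η ω * Y ω ∂μ = ∫ ω, η ω * η ω ∂μ := aux13_int_mul hm hYint hηsm hηb
  have I1 : Integrable (fun ω => Y ω - 2 * (η ω * Y ω)) μ := hYint.sub (I_ηY.const_mul 2)
  -- mmse = ∫ Y - ∫ η²
  have hmmse : mmse μ Y Z = ∫ ω, Y ω ∂μ - ∫ ω, η ω * η ω ∂μ := by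
    have hmd : mmse μ Y Z = ∫ ω, (Y ω - η ω) ^ 2 ∂μ := by
      rw [hη_def, hmz]; rfl
    have e1 : mmse μ Y Z = ∫ ω, (Y ω - 2 * (η ω * Y ω) + η ω * η ω) ∂μ := by
      rw [hmd]
      refine integral_congr_ae (.of_forall fun ω => ?_)
      linear_combination hY2 ω
    rw [e1, integral_add I1 I_ηη, integral_sub hYint (I_ηY.const_mul 2),
      integral_const_mul, hηY]
    ring
  -- error decomposition for a 0/1 decoder given by an m-measurable set A
  have key : ∀ A : Set Ω, MeasurableSet[m] A →
      (Integrable (fun ω => A.indicator (fun _ => (1 : ℝ)) ω * η ω) μ) ∧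
      ∫ ω, (Y ω - A.indicator (fun _ => (1 : ℝ)) ω) ^ 2 ∂μ
        = ∫ ω, Y ω ∂μ - 2 * ∫ ω, A.indicator (fun _ => (1 : ℝ)) ω * η ω ∂μ
          + ∫ ω, A.indicator (fun _ => (1 : ℝ)) ω ∂μ := by
    intro A hA
    set f : Ω → ℝ := A.indicator (fun _ => (1 : ℝ)) with hf_def
    have hf2 : ∀ ω, f ω * f ω = f ω := by
      intro ω; by_cases hω : ω ∈ A <;> simp [hf_def, Set.indicator_apply, hω]
    have hfb : ∀ᵐ ω ∂μ, ‖f ω‖ ≤ 1 := ae_of_all _ fun ω => by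
      by_cases hω : ω ∈ A <;> simp [hf_def, Set.indicator_apply, hω]
    have hfsm : StronglyMeasurable[m] f := stronglyMeasurable_const.indicator hA
    have hfaesm : AEStronglyMeasurable f μ := (hfsm.mono hm).aestronglyMeasurable
    have I_f : Integrable f μ := (integrable_const (1 : ℝ)).indicator (hm _ hA)
    have I_fY : Integrable (fun ω => f ω * Y ω) μ := hYint.bdd_mul hfaesm hfb
    have I_fη : Integrable (fun ω => f ω * η ω) μ := hηint.bdd_mul hfaesm hfb
    have hfY : ∫ ω, f ω * Y ω ∂μ = ∫ ω, f ω * η ω ∂μ := aux13_int_mul hm hYint hfsm hfb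
    refine ⟨I_fη, ?_⟩
    have I2 : Integrable (fun ω => Y ω - 2 * (f ω * Y ω)) μ := hYint.sub (I_fY.const_mul 2)
    have e1 : ∫ ω, (Y ω - f ω) ^ 2 ∂μ = ∫ ω, (Y ω - 2 * (f ω * Y ω) + f ω) ∂μ := by
      refine integral_congr_ae (.of_forall fun ω => ?_)
      linear_combination hY2 ω + hf2 ω
    rw [e1, integral_add I2 I_f, integral_sub hYint (I_fY.const_mul 2),
      integral_const_mul, hfY]
  constructor
  · -- lower bound: exhibit the Bayes decoder
    set A : Set Ω := {ω | (1 : ℝ) / 2 ≤ η ω} with hA_def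
    have hAm : MeasurableSet[m] A := measurableSet_le measurable_const hηsm.measurable
    obtain ⟨S, hS, hSA⟩ : ∃ S : Set β, MeasurableSet S ∧ Z ⁻¹' S = A := by
      rw [hmz] at hAm; exact hAm
    set g₀ : β → ℝ := S.indicator (fun _ => (1 : ℝ)) with hg₀_def
    have hg₀ : Measurable g₀ := measurable_const.indicator hS
    set f : Ω → ℝ := A.indicator (fun _ => (1 : ℝ)) with hf_def
    have hcomp : ∀ ω, g₀ (Z ω) = f ω := by
      intro ω
      have hiff : Z ω ∈ S ↔ ω ∈ A := by rw [← hSA]; rfl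
      by_cases hω : ω ∈ A
      · have h1 : Z ω ∈ S := hiff.mpr hω
        simp [hg₀_def, hf_def, Set.indicator_apply, hω, h1]
      · have h1 : Z ω ∉ S := fun h => hω (hiff.mp h)
        simp [hg₀_def, hf_def, Set.indicator_apply, hω, h1]
    set E₀ : Set Ω := {ω | g₀ (Z ω) ≠ Y ω} with hE₀_def
    have hE₀ : MeasurableSet E₀ := by
      have h : E₀ = {ω | g₀ (Z ω) = Y ω}ᶜ := by ext ω; simp [hE₀_def]
      rw [h]
      exact (measurableSet_eq_fun (hg₀.comp hZ) hY).compl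
    have hmemS : (μ E₀).toReal ∈
        {r : ℝ | ∃ g : β → ℝ, Measurable g ∧ r = (μ {ω | g (Z ω) ≠ Y ω}).toReal} :=
      ⟨g₀, hg₀, rfl⟩
    have hbdd : BddBelow
        {r : ℝ | ∃ g : β → ℝ, Measurable g ∧ r = (μ {ω | g (Z ω) ≠ Y ω}).toReal} := by
      refine ⟨0, fun r hr => ?_⟩
      obtain ⟨g, hg, rfl⟩ := hr
      exact ENNReal.toReal_nonneg
    have hsInf_le : sInf {r : ℝ | ∃ g : β → ℝ, Measurable g ∧
        r = (μ {ω | g (Z ω) ≠ Y ω}).toReal} ≤ (μ E₀).toReal := csInf_le hbdd hmemS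
    have hf01 : ∀ ω, f ω = 0 ∨ f ω = 1 := by
      intro ω; by_cases hω : ω ∈ A <;> simp [hf_def, Set.indicator_apply, hω]
    have herr : (μ E₀).toReal = ∫ ω, (Y ω - f ω) ^ 2 ∂μ := by
      show μ.real E₀ = _
      rw [← integral_indicator_one hE₀]
      refine integral_congr_ae (.of_forall fun ω => ?_)
      by_cases hω : ω ∈ E₀
      · have hne : f ω ≠ Y ω := by
          have h := hω; rw [hE₀_def] at h; simp only [Set.mem_setOf_eq, hcomp ω] at h
          exact h
        rcases hBer ω with h | h <;> rcases hf01 ω with h' | h'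
        · exact absurd (h'.trans h.symm) hne
        · simp [Set.indicator_apply, hω, h, h']
        · simp [Set.indicator_apply, hω, h, h']
        · exact absurd (h'.trans h.symm) hne
      · have heq : f ω = Y ω := by
          have h := hω; rw [hE₀_def] at h; simp only [Set.mem_setOf_eq, not_not] at h
          rw [← hcomp ω, h]
        simp [Set.indicator_apply, hω, heq]
    obtain ⟨I_fη, hexp⟩ := key A hAm
    have I_f : Integrable f μ := (integrable_const (1 : ℝ)).indicator (hm _ hAm)
    have hptwise : ∀ᵐ ω ∂μ, f ω - 2 * (f ω * η ω) + 2 * (η ω * η ω) ≤ η ω := by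
      filter_upwards [hη01] with ω hω
      by_cases hmem : ω ∈ A
      · have h2 : (1 : ℝ) / 2 ≤ η ω := hmem
        have hfω : f ω = 1 := by simp [hf_def, Set.indicator_apply, hmem]
        rw [hfω]; nlinarith [hω.1, hω.2]
      · have h2 : η ω < 1 / 2 := lt_of_not_ge hmem
        have hfω : f ω = 0 := by simp [hf_def, Set.indicator_apply, hmem]
        rw [hfω]; nlinarith [hω.1, hω.2]
    have I3 : Integrable (fun ω => f ω - 2 * (f ω * η ω)) μ := I_f.sub (I_fη.const_mul 2)
    have I4 : Integrable (fun ω => f ω - 2 * (f ω * η ω) + 2 * (η ω * η ω)) μ :=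
      I3.add (I_ηη.const_mul 2)
    have hint_le : ∫ ω, (f ω - 2 * (f ω * η ω) + 2 * (η ω * η ω)) ∂μ ≤ ∫ ω, η ω ∂μ :=
      integral_mono_ae I4 hηint hptwise
    have hsplit : ∫ ω, (f ω - 2 * (f ω * η ω) + 2 * (η ω * η ω)) ∂μ
        = ∫ ω, f ω ∂μ - 2 * ∫ ω, f ω * η ω ∂μ + 2 * ∫ ω, η ω * η ω ∂μ := by
      rw [integral_add I3 (I_ηη.const_mul 2), integral_sub I_f (I_fη.const_mul 2),
        integral_const_mul, integral_const_mul]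
    have hintη : ∫ ω, η ω ∂μ = ∫ ω, Y ω ∂μ := integral_condExp hm
    have hfinal : (μ E₀).toReal ≤ 2 * mmse μ Y Z := by
      rw [herr, hexp, hmmse]
      rw [hsplit, hintη] at hint_le
      linarith
    linarith
  · -- upper bound: mmse ≤ every decoder's error probability
    refine le_csInf ⟨(μ {ω | (fun _ : β => (0 : ℝ)) (Z ω) ≠ Y ω}).toReal,
      fun _ => (0 : ℝ), measurable_const, rfl⟩ ?_
    rintro r ⟨g, hg, rfl⟩
    set T : Set β := {z | (1 : ℝ) / 2 ≤ g z} with hT_def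
    have hT : MeasurableSet T := measurableSet_le measurable_const hg
    set A : Set Ω := Z ⁻¹' T with hA_def
    have hAm : MeasurableSet[m] A := by rw [hmz]; exact ⟨T, hT, rfl⟩
    set f : Ω → ℝ := A.indicator (fun _ => (1 : ℝ)) with hf_def
    obtain ⟨I_fη, hexp⟩ := key A hAm
    have I_f : Integrable f μ := (integrable_const (1 : ℝ)).indicator (hm _ hAm)
    have hf01 : ∀ ω, f ω = 0 ∨ f ω = 1 := by
      intro ω; by_cases hω : ω ∈ A <;> simp [hf_def, Set.indicator_apply, hω]
    have hle1 : mmse μ Y Z ≤ ∫ ω, (Y ω - f ω) ^ 2 ∂μ := by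
      rw [hmmse, hexp]
      have I3 : Integrable (fun ω => f ω - 2 * (f ω * η ω)) μ := I_f.sub (I_fη.const_mul 2)
      have hnn : 0 ≤ ∫ ω, (f ω - 2 * (f ω * η ω) + η ω * η ω) ∂μ := by
        refine integral_nonneg fun ω => ?_
        simp only [Pi.zero_apply]
        have hf2 : f ω * f ω = f ω := by
          rcases hf01 ω with h | h <;> simp [h]
        nlinarith [sq_nonneg (f ω - η ω), hf2]
      have hsplit : ∫ ω, (f ω - 2 * (f ω * η ω) + η ω * η ω) ∂μ
          = ∫ ω, f ω ∂μ - 2 * ∫ ω, f ω * η ω ∂μ + ∫ ω, η ω * η ω ∂μ := by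
        rw [integral_add I3 I_ηη, integral_sub I_f (I_fη.const_mul 2), integral_const_mul]
      rw [hsplit] at hnn
      linarith
    set E : Set Ω := {ω | g (Z ω) ≠ Y ω} with hE_def
    have hE : MeasurableSet E := by
      have h : E = {ω | g (Z ω) = Y ω}ᶜ := by ext ω; simp [hE_def]
      rw [h]
      exact (measurableSet_eq_fun (hg.comp hZ) hY).compl
    have hpt : ∀ ω, (Y ω - f ω) ^ 2 ≤ E.indicator (fun _ => (1 : ℝ)) ω := by
      intro ω
      by_cases hω : ω ∈ E
      · rcases hBer ω with h | h <;> rcases hf01 ω with h' | h' <;>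
          simp [Set.indicator_apply, hω, h, h'] <;> norm_num
      · have heq : g (Z ω) = Y ω := by
          have h := hω; rw [hE_def] at h; simp only [Set.mem_setOf_eq, not_not] at h
          exact h
        have hfY : f ω = Y ω := by
          rcases hBer ω with h | h
          · have hlt : ¬ ((1 : ℝ) / 2 ≤ g (Z ω)) := by rw [heq, h]; norm_num
            have hA' : ω ∉ A := hlt
            simp [hf_def, Set.indicator_apply, hA', h]
          · have hge : (1 : ℝ) / 2 ≤ g (Z ω) := by rw [heq, h]; norm_num
            have hA' : ω ∈ A := hge
            simp [hf_def, Set.indicator_apply, hA', h]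
        simp [Set.indicator_apply, hω, hfY]
    have I_sq : Integrable (fun ω => (Y ω - f ω) ^ 2) μ := by
      have hfb : ∀ᵐ ω ∂μ, ‖f ω‖ ≤ 1 := ae_of_all _ fun ω => by
        rcases hf01 ω with h | h <;> simp [h]
      have I_fY : Integrable (fun ω => f ω * Y ω) μ :=
        hYint.bdd_mul
          (((stronglyMeasurable_const.indicator hAm : StronglyMeasurable[m] f).mono
            hm).aestronglyMeasurable) hfb
      have I2 : Integrable (fun ω => Y ω - 2 * (f ω * Y ω) + f ω) μ :=
        (hYint.sub (I_fY.const_mul 2)).add I_f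
      refine I2.congr (.of_forall fun ω => ?_)
      have hf2 : f ω * f ω = f ω := by
        rcases hf01 ω with h | h <;> simp [h]
      linear_combination (-1 : ℝ) * hY2 ω + (-1 : ℝ) * hf2
    have hle2 : ∫ ω, (Y ω - f ω) ^ 2 ∂μ ≤ (μ E).toReal := by
      show _ ≤ μ.real E
      rw [← integral_indicator_one hE]
      exact integral_mono I_sq ((integrable_const (1 : ℝ)).indicator hE) hpt
    exact hle1.trans hle2

/-- For binary `Y ~ Bernoulli(p)` with `p ≥ 1/2`, the Bayes error probability `P_e`
(minimum over decoders `Ŷ` of `Pr(Ŷ(Z) ≠ Y)`) satisfies `P_e/2 ≤ mmse(Y|Z) ≤ P_e`. -/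
theorem stmt13 {Ω : Type*} [MeasurableSpace Ω] (μ : Measure Ω) [IsProbabilityMeasure μ]
    {β : Type*} [MeasurableSpace β] (Y : Ω → ℝ) (Z : Ω → β)
    (hY : Measurable Y) (hZ : Measurable Z)
    (hBer : ∀ ω, Y ω = 0 ∨ Y ω = 1) (hp : (1 : ENNReal) / 2 ≤ μ (Y ⁻¹' {1})) :
    (1 / 2) * sInf {r : ℝ | ∃ g : β → ℝ, Measurable g ∧ r = (μ {ω | g (Z ω) ≠ Y ω}).toReal}
        ≤ mmse μ Y Z ∧
      mmse μ Y Z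
        ≤ sInf {r : ℝ | ∃ g : β → ℝ, Measurable g ∧ r = (μ {ω | g (Z ω) ≠ Y ω}).toReal} :=
  stmt13_core μ Y Z hY hZ hBer hZ.comap_le rfl
end
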